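/- arXiv:2402.00226 — 4 statements merged into one kernel-verified Lean document; each statement's English description precedes it below -/
import Mathlib

section
/- Assume γ < ω₁, X ⊆ T_{γ+1} is finite with unique drop-downs to γ, {f_τ : τ ∈ I} is a countable indexed family of automorphisms of T↾(γ+1), and A ⊆ I is finite. Then there exists an indexed family {g_τ : τ ∈ I} of automorphisms of T↾(γ+2) such that: (1) f_τ ⊆ g_τ for all τ ∈ I; (2) for all τ ∈ A, X↾γ and X are g_τ-consistent; and (3) if {f_τ : τ ∈ A} is separated on X↾γ, then {g_τ : τ ∈ I} is separated. -/
noncomputable section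

/-- The ordinal `ω₁`. -/
def omega1 : Ordinal := (Cardinal.aleph 1).ord

/-- A normal, infinitely splitting `ω₁`-tree structure on the partial order `α`.
`height x` is the height of `x` (the order type of its set of strict predecessors,
which is linearly ordered by `pred_linear`), and `restrict x β` is the unique node
of height `β` below `x` (for `β ≤ height x`). -/
structure OmegaOneTree (α : Type) [PartialOrder α] where
  height : α → Ordinal
  restrict : α → Ordinal → α
  height_lt_omega1 : ∀ x : α, height x < omega1
  height_strictMono : ∀ {x y : α}, x < y → height x < height y
  pred_linear : ∀ {x y z : α}, y < x → z < x → y ≤ z ∨ z ≤ y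
  restrict_le : ∀ (x : α) {β : Ordinal}, β ≤ height x → restrict x β ≤ x
  height_restrict : ∀ (x : α) {β : Ordinal}, β ≤ height x → height (restrict x β) = β
  restrict_eq : ∀ {x y : α} {β : Ordinal}, y ≤ x → height y = β → restrict x β = y
  level_nonempty : ∀ β : Ordinal, β < omega1 → ∃ x : α, height x = β
  level_countable : ∀ β : Ordinal, {x : α | height x = β}.Countable
  root_exists : ∃ r : α, height r = 0 ∧ ∀ x : α, r ≤ x
  splitting : ∀ x : α, {y : α | x < y ∧ height y = height x + 1}.Infinite
  exists_above : ∀ (x : α) {β : Ordinal}, height x < β → β < omega1 →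
    ∃ y : α, x < y ∧ height y = β
  limit_eq : ∀ {x y : α}, height x = height y → Order.IsSuccLimit (height x) →
    (∀ z : α, z < x ↔ z < y) → x = y

variable {α : Type} [PartialOrder α]

/-- The pair `(g, g')` is an automorphism of `T↾(β+1)` together with its inverse:
both are level preserving on `T↾(β+1)`, mutually inverse there, and strictly
increasing there (hence `g` is an order isomorphism of `T↾(β+1)` onto itself). -/
def IsTreeAuto (T : OmegaOneTree α) (β : Ordinal) (g g' : α → α) : Prop :=
  (∀ x : α, T.height x ≤ β → T.height (g x) = T.height x) ∧
  (∀ x : α, T.height x ≤ β → T.height (g' x) = T.height x) ∧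
  (∀ x : α, T.height x ≤ β → g' (g x) = x) ∧
  (∀ x : α, T.height x ≤ β → g (g' x) = x) ∧
  (∀ x y : α, T.height y ≤ β → x < y → g x < g y) ∧
  (∀ x y : α, T.height y ≤ β → x < y → g' x < g' y)

/-- `(g, g')` extends `(f, f')` on `T↾(γ+1)` (i.e. `f ⊆ g` for automorphisms). -/
def AutoExtends (T : OmegaOneTree α) (γ : Ordinal) (f f' g g' : α → α) : Prop :=
  (∀ x : α, T.height x ≤ γ → g x = f x) ∧ (∀ x : α, T.height x ≤ γ → g' x = f' x)

/-- `X↾lo` and `X` are `g`-consistent: for all `x, y ∈ X`,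
`g(x↾lo) = y↾lo` iff `g(x) = y`. -/
def AutoConsistentSet (T : OmegaOneTree α) (g : α → α) (lo : Ordinal) (X : Set α) : Prop :=
  ∀ x ∈ X, ∀ y ∈ X, (g (T.restrict x lo) = T.restrict y lo ↔ g x = y)

/-- The tuples `a` and `b` (with `a = b↾lo` componentwise) are `g`-consistent:
for all `i, j`, `g(a i) = a j` iff `g(b i) = b j`. -/
def AutoConsistentPair (g : α → α) {n : ℕ} (a b : Fin n → α) : Prop :=
  ∀ i j : Fin n, (g (a i) = a j ↔ g (b i) = b j)

/-- The indexed family of automorphisms `(g, g')` is separated on the injective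
tuple `a`: no member of the tuple satisfies a relation with itself, and each
member satisfies at most one relation `g_τ^m(a k) = a i` with earlier members. -/
def AutoSepTuple {ι : Type} (g g' : ι → α → α) {n : ℕ} (a : Fin n → α) : Prop :=
  (∀ (k : Fin n) (τ : ι), g τ (a k) ≠ a k) ∧
  ∀ (k i₁ i₂ : Fin n) (m₁ m₂ : Bool) (τ₁ τ₂ : ι), i₁ < k → i₂ < k →
    cond m₁ (g τ₁ (a k)) (g' τ₁ (a k)) = a i₁ →
    cond m₂ (g τ₂ (a k)) (g' τ₂ (a k)) = a i₂ →
    i₁ = i₂ ∧ m₁ = m₂ ∧ τ₁ = τ₂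

/-- The indexed family of automorphisms `(g, g')` is separated on the finite set
`X`: some injective tuple listing the elements of `X` witnesses separation. -/
def AutoSepSet {ι : Type} (g g' : ι → α → α) (X : Set α) : Prop :=
  ∃ (n : ℕ) (a : Fin n → α), Function.Injective a ∧ Set.range a = X ∧ AutoSepTuple g g' a

/-- The indexed family of automorphisms `(g, g')` of `T↾(β+1)` is separated:
it is separated on every finite subset of the level `T_β`. -/
def AutoSeparated (T : OmegaOneTree α) (β : Ordinal) {ι : Type} (g g' : ι → α → α) : Prop :=
  ∀ X : Set α, X.Finite → (∀ x ∈ X, T.height x = β) → AutoSepSet g g' X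

namespace L514
open FreeGroup List

lemma ord_lt_succ (γ : Ordinal) : γ < γ + 1 := by
  rw [Ordinal.add_one_eq_succ]; exact Order.lt_succ γ

lemma ord_le_succ_cases {β γ : Ordinal} (h : β ≤ γ + 1) : β ≤ γ ∨ β = γ + 1 := by
  rcases lt_or_eq_of_le h with h | h
  · left; rwa [Ordinal.add_one_eq_succ, Order.lt_succ_iff] at h
  · right; exact h

variable (T : OmegaOneTree α) (γ : Ordinal)

/-- The fiber over `u` at level `γ+1`. -/
def Fib (u : α) : Set α := {x | T.height x = γ + 1 ∧ T.restrict x γ = u}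

/-- Level `γ` as a subtype. -/
def U := {u : α // T.height u = γ}

lemma hres {x : α} (hx : T.height x = γ + 1) : T.height (T.restrict x γ) = γ :=
  T.height_restrict x (by rw [hx]; exact (ord_lt_succ γ).le)

lemma self_mem_fib {x : α} (hx : T.height x = γ + 1) : x ∈ Fib T γ (T.restrict x γ) :=
  ⟨hx, rfl⟩

lemma fib_eq_succ_set {u : α} (hu : T.height u = γ) :
    Fib T γ u = {y | u < y ∧ T.height y = T.height u + 1} := by
  ext y
  simp only [Fib, Set.mem_setOf_eq, hu]
  constructor
  · rintro ⟨h1, h2⟩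
    have hle : u ≤ y := h2 ▸ T.restrict_le y (by rw [h1]; exact (ord_lt_succ γ).le)
    refine ⟨lt_of_le_of_ne hle ?_, h1⟩
    rintro rfl
    exact (ord_lt_succ γ).ne (hu.symm.trans h1)
  · rintro ⟨h1, h2⟩
    exact ⟨h2, T.restrict_eq h1.le hu⟩

variable {ι : Type}

lemma exists_fib_equiv [Countable ι] (u : α) (hu : T.height u = γ) :
    Nonempty ((Fib T γ u : Set α) ≃ (FreeGroup ι × ℤ)) := by
  classical
  have hcount : (Fib T γ u).Countable :=
    (T.level_countable (γ + 1)).mono (fun x hx => hx.1)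
  have hinf : (Fib T γ u).Infinite := by
    rw [fib_eq_succ_set T γ hu]; exact T.splitting u
  haveI := hcount.to_subtype
  haveI := hinf.to_subtype
  haveI : Countable (FreeGroup ι) := FreeGroup.toWord_injective.countable
  haveI : Infinite (FreeGroup ι × ℤ) :=
    Infinite.of_injective (fun n : ℤ => ((1 : FreeGroup ι), n))
      (by intro a b h; simpa using (Prod.mk.injEq _ _ _ _ ▸ h :).2)
  obtain ⟨e⟩ := nonempty_encodable (Fib T γ u : Set α)
  obtain ⟨e'⟩ := nonempty_encodable (FreeGroup ι × ℤ)
  letI := e; letI := e'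
  letI : Denumerable (Fib T γ u : Set α) := Denumerable.ofEncodableOfInfinite _
  letI : Denumerable (FreeGroup ι × ℤ) := Denumerable.ofEncodableOfInfinite _
  exact ⟨(Denumerable.eqv _).trans (Denumerable.eqv _).symm⟩

section Gmap

variable (E : ∀ u : U T γ, (Fib T γ u.1 : Set α) ≃ (FreeGroup ι × ℤ))
variable (F : ι → α → α) (hF : ∀ τ (x : α), T.height x ≤ γ → T.height (F τ x) = T.height x)
variable (C : ι → FreeGroup ι)

/-- `F τ` as a map on level `γ`. -/
def FUu (τ : ι) (u : U T γ) : U T γ := ⟨F τ u.1, by rw [hF τ u.1 u.2.le, u.2]⟩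

/-- The one-step extension of `F τ` determined by the coordinates `E` and the
left-translation parameters `C`. -/
def gmap (τ : ι) (x : α) : α :=
  if hx : T.height x = γ + 1 then
    ((E (FUu T γ F hF τ ⟨T.restrict x γ, hres T γ hx⟩)).symm
      (C τ * (E ⟨T.restrict x γ, hres T γ hx⟩ ⟨x, self_mem_fib T γ hx⟩).1,
       (E ⟨T.restrict x γ, hres T γ hx⟩ ⟨x, self_mem_fib T γ hx⟩).2)).1
  else F τ x

lemma gmap_spec (τ : ι) (u : U T γ) (x : α) (hx : x ∈ Fib T γ u.1) :
    gmap T γ E F hF C τ x =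
      ((E (FUu T γ F hF τ u)).symm
        (C τ * (E u ⟨x, hx⟩).1, (E u ⟨x, hx⟩).2)).1 := by
  obtain ⟨u, hu⟩ := u
  have h2 : T.restrict x γ = u := hx.2
  subst h2
  unfold gmap
  rw [dif_pos hx.1]

lemma gmap_low (τ : ι) (x : α) (hx : T.height x ≤ γ) : gmap T γ E F hF C τ x = F τ x := by
  unfold gmap
  rw [dif_neg]
  intro h
  rw [h] at hx
  exact absurd hx (not_le.mpr (ord_lt_succ γ))

lemma gmap_mem (τ : ι) (x : α) (hx : T.height x = γ + 1) :
    gmap T γ E F hF C τ x ∈ Fib T γ (F τ (T.restrict x γ)) := by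
  rw [gmap_spec T γ E F hF C τ ⟨T.restrict x γ, hres T γ hx⟩ x (self_mem_fib T γ hx)]
  exact ((E _).symm _).2

lemma gmap_height (τ : ι) (x : α) (hx : T.height x ≤ γ + 1) :
    T.height (gmap T γ E F hF C τ x) = T.height x := by
  rcases ord_le_succ_cases hx with h | h
  · rw [gmap_low T γ E F hF C τ x h]; exact hF τ x h
  · rw [(gmap_mem T γ E F hF C τ x h).1, h]

lemma gmap_inv (G : ι → α → α) (hG : ∀ τ (x : α), T.height x ≤ γ → T.height (G τ x) = T.height x)
    (D : ι → FreeGroup ι)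
    (hinv : ∀ τ (x : α), T.height x ≤ γ → G τ (F τ x) = x)
    (hCD : ∀ τ w, D τ * (C τ * w) = w)
    (τ : ι) (x : α) (hx : T.height x ≤ γ + 1) :
    gmap T γ E G hG D τ (gmap T γ E F hF C τ x) = x := by
  rcases ord_le_succ_cases hx with h | h
  · rw [gmap_low T γ E F hF C τ x h,
      gmap_low T γ E G hG D τ (F τ x) (le_of_eq_of_le (hF τ x h) h)]
    exact hinv τ x h
  · set u : U T γ := ⟨T.restrict x γ, hres T γ h⟩ with hudef
    have hmem : x ∈ Fib T γ u.1 := self_mem_fib T γ h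
    rw [gmap_spec T γ E F hF C τ u x hmem]
    set s := E u ⟨x, hmem⟩ with hs
    set y := (E (FUu T γ F hF τ u)).symm (C τ * s.1, s.2) with hy
    rw [gmap_spec T γ E G hG D τ (FUu T γ F hF τ u) y.1 y.2]
    rw [Subtype.coe_eta]
    rw [hy, Equiv.apply_symm_apply]
    rw [show (D τ * (C τ * s.1, s.2).1, (C τ * s.1, s.2).2) = (D τ * (C τ * s.1), s.2) from rfl,
      hCD]
    have huu : FUu T γ G hG τ (FUu T γ F hF τ u) = u := Subtype.ext (hinv τ u.1 u.2.le)
    rw [huu, Prod.mk.eta, hs, Equiv.symm_apply_apply]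

lemma gmap_mono (hFmono : ∀ τ (x y : α), T.height y ≤ γ → x < y → F τ x < F τ y)
    (τ : ι) (x y : α) (hy : T.height y ≤ γ + 1) (hxy : x < y) :
    gmap T γ E F hF C τ x < gmap T γ E F hF C τ y := by
  rcases ord_le_succ_cases hy with h | h
  · have hxh : T.height x ≤ γ := ((T.height_strictMono hxy).trans_le h).le
    rw [gmap_low T γ E F hF C τ x hxh, gmap_low T γ E F hF C τ y h]
    exact hFmono τ x y h hxy
  · have hxle : T.height x ≤ γ := by
      have h2 := T.height_strictMono hxy
      rw [h, Ordinal.add_one_eq_succ, Order.lt_succ_iff] at h2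
      exact h2
    rw [gmap_low T γ E F hF C τ x hxle]
    have huh : T.height (T.restrict y γ) = γ := hres T γ h
    have huy : T.restrict y γ < y := by
      refine lt_of_le_of_ne (T.restrict_le y (by rw [h]; exact (ord_lt_succ γ).le)) ?_
      intro hcontr
      rw [hcontr] at huh
      rw [h] at huh
      exact (ord_lt_succ γ).ne' huh
    have hxu : x ≤ T.restrict y γ := by
      rcases T.pred_linear hxy huy with h' | h'
      · exact h'
      · rcases lt_or_eq_of_le h' with h'' | h''
        · exfalso
          have := T.height_strictMono h''
          rw [huh] at this
          exact absurd hxle (not_le.mpr this)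
        · exact le_of_eq h''.symm
    have hmem := gmap_mem T γ E F hF C τ y h
    have h2 : F τ (T.restrict y γ) = T.restrict (gmap T γ E F hF C τ y) γ := hmem.2.symm
    have hle1 : F τ x ≤ F τ (T.restrict y γ) := by
      rcases lt_or_eq_of_le hxu with h' | h'
      · exact (hFmono τ x (T.restrict y γ) huh.le h').le
      · rw [h']
    have hle2 : F τ (T.restrict y γ) ≤ gmap T γ E F hF C τ y := by
      rw [h2]
      exact T.restrict_le _ (by rw [hmem.1]; exact (ord_lt_succ γ).le)
    refine lt_of_le_of_ne (hle1.trans hle2) ?_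
    intro hcontr
    have hh1 : T.height (F τ x) = T.height x := hF τ x hxle
    rw [hcontr, hmem.1] at hh1
    rw [← hh1] at hxle
    exact absurd hxle (not_le.mpr (ord_lt_succ γ))

variable (ι) in
/-- The `E`-coordinates of a point of level `γ+1`. -/
def cs (x : α) : FreeGroup ι × ℤ :=
  if hx : T.height x = γ + 1 then E ⟨T.restrict x γ, hres T γ hx⟩ ⟨x, self_mem_fib T γ hx⟩
  else (1, 0)

lemma cs_spec (u : U T γ) (x : α) (hx : x ∈ Fib T γ u.1) :
    cs T γ ι E x = E u ⟨x, hx⟩ := by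
  obtain ⟨u, hu⟩ := u
  have h2 : T.restrict x γ = u := hx.2
  subst h2
  unfold cs
  rw [dif_pos hx.1]

lemma gmap_eq_iff (τ : ι) (x z : α) (hx : T.height x = γ + 1) (hz : T.height z = γ + 1) :
    gmap T γ E F hF C τ x = z ↔
      (F τ (T.restrict x γ) = T.restrict z γ ∧
        cs T γ ι E z = (C τ * (cs T γ ι E x).1, (cs T γ ι E x).2)) := by
  set ux : U T γ := ⟨T.restrict x γ, hres T γ hx⟩ with hux
  have hxmem : x ∈ Fib T γ ux.1 := self_mem_fib T γ hx
  have hcsx : cs T γ ι E x = E ux ⟨x, hxmem⟩ := cs_spec T γ E ux x hxmem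
  have hspec := gmap_spec T γ E F hF C τ ux x hxmem
  constructor
  · intro h
    have hmem := gmap_mem T γ E F hF C τ x hx
    rw [h] at hmem
    refine ⟨hmem.2.symm, ?_⟩
    have hzmem : z ∈ Fib T γ (FUu T γ F hF τ ux).1 := ⟨hz, hmem.2⟩
    have hzel : (⟨z, hzmem⟩ : (Fib T γ (FUu T γ F hF τ ux).1 : Set α)) =
        (E (FUu T γ F hF τ ux)).symm (C τ * (E ux ⟨x, hxmem⟩).1, (E ux ⟨x, hxmem⟩).2) :=
      Subtype.ext (by show z = _; rw [← h]; exact hspec)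
    rw [cs_spec T γ E (FUu T γ F hF τ ux) z hzmem, hzel, Equiv.apply_symm_apply, hcsx]
  · rintro ⟨h1, h2⟩
    have hzmem : z ∈ Fib T γ (FUu T γ F hF τ ux).1 := ⟨hz, h1.symm⟩
    rw [hspec, ← hcsx, show (C τ * (cs T γ ι E x).1, (cs T γ ι E x).2) = cs T γ ι E z from h2.symm,
      cs_spec T γ E (FUu T γ F hF τ ux) z hzmem, Equiv.symm_apply_apply]

lemma gmap_norm_key (τ : ι) (x z : α) (hx : T.height x = γ + 1) (hz : T.height z = γ + 1)
    (h : gmap T γ E F hF C τ x = z) :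
    (cs T γ ι E z).1 = C τ * (cs T γ ι E x).1 := by
  have := ((gmap_eq_iff T γ E F hF C τ x z hx hz).mp h).2
  rw [this]

end Gmap

section XAdapted

lemma exists_E [Countable ι] (X : Set α) (hXlev : ∀ x ∈ X, T.height x = γ + 1)
    (hXdrop : Set.InjOn (fun x => T.restrict x γ) X) (v : α → FreeGroup ι) :
    ∃ E : ∀ u : U T γ, (Fib T γ u.1 : Set α) ≃ (FreeGroup ι × ℤ),
      ∀ (u : U T γ) (x : α), x ∈ X → ∀ (h : x ∈ Fib T γ u.1), E u ⟨x, h⟩ = (v x, 0) := by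
  classical
  have base : ∀ u : U T γ, (Fib T γ u.1 : Set α) ≃ (FreeGroup ι × ℤ) :=
    fun u => (exists_fib_equiv T γ u.1 u.2).some
  refine ⟨fun u =>
    if h : ∃ x, x ∈ X ∧ T.restrict x γ = u.1 then
      (base u).trans (Equiv.swap
        (base u ⟨h.choose, ⟨hXlev _ h.choose_spec.1, h.choose_spec.2⟩⟩) (v h.choose, 0))
    else base u, ?_⟩
  intro u x hx h
  have hex : ∃ x', x' ∈ X ∧ T.restrict x' γ = u.1 := ⟨x, hx, h.2⟩
  dsimp only
  rw [dif_pos hex]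
  have hxx : hex.choose = x := hXdrop hex.choose_spec.1 hx (hex.choose_spec.2.trans h.2.symm)
  subst hxx
  rw [Equiv.trans_apply]
  exact Equiv.swap_apply_left _ _

end XAdapted

section Labels

/-- Recursive construction of free-group labels along the pick function. -/
def vvec (pick : ℕ → Option (ℕ × Bool × ι)) : ℕ → List (FreeGroup ι)
  | 0 => []
  | (k+1) =>
    vvec pick k ++ [match pick k with
      | none => 1
      | some (i, m, τ) => cond m ((FreeGroup.of τ)⁻¹ * (vvec pick k).getD i 1)
          (FreeGroup.of τ * (vvec pick k).getD i 1)]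

def vl (pick : ℕ → Option (ℕ × Bool × ι)) (k : ℕ) : FreeGroup ι :=
  (vvec pick (k+1)).getD k 1

lemma vvec_length (pick : ℕ → Option (ℕ × Bool × ι)) : ∀ k, (vvec pick k).length = k
  | 0 => rfl
  | (k+1) => by rw [vvec]; simp [vvec_length pick k]

lemma vvec_getD (pick : ℕ → Option (ℕ × Bool × ι)) {i k : ℕ} (h : i < k) :
    (vvec pick k).getD i 1 = vl pick i := by
  induction k with
  | zero => omega
  | succ k ih =>
    rcases lt_or_eq_of_le (Nat.lt_succ_iff.mp h) with h' | h'
    · rw [vvec, List.getD_append _ _ _ _ (by rw [vvec_length]; exact h')]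
      exact ih h'
    · subst h'; rfl

lemma vl_last (pick : ℕ → Option (ℕ × Bool × ι)) (k : ℕ) :
    vl pick k = (match pick k with
      | none => 1
      | some (i, m, τ) => cond m ((FreeGroup.of τ)⁻¹ * (vvec pick k).getD i 1)
          (FreeGroup.of τ * (vvec pick k).getD i 1)) := by
  show (vvec pick (k+1)).getD k 1 = _
  rw [vvec, List.getD_append_right _ _ _ _ (by rw [vvec_length])]
  rw [vvec_length]
  simp

lemma vl_some (pick : ℕ → Option (ℕ × Bool × ι)) {k : ℕ} {i : ℕ} {m : Bool} {τ : ι}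
    (hik : i < k) (h : pick k = some (i, m, τ)) :
    vl pick k = cond m ((FreeGroup.of τ)⁻¹ * vl pick i) (FreeGroup.of τ * vl pick i) := by
  rw [vl_last, h]
  cases m <;> simp only [cond] <;> rw [vvec_getD pick hik]

end Labels

section SortedEnum

lemma exists_sorted_enum {β : Type} (key : β → ℕ) (Y : Set β) (hY : Y.Finite) :
    ∃ (n : ℕ) (a : Fin n → β), Function.Injective a ∧ Set.range a = Y ∧
      ∀ i k : Fin n, i < k → key (a i) ≤ key (a k) := by
  classical
  set r : β → β → Prop := fun x y => key x ≤ key y with hr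
  haveI : IsTotal β r := ⟨fun a b => le_total (key a) (key b)⟩
  haveI : IsTrans β r := ⟨fun a b c => le_trans⟩
  set l0 := hY.toFinset.toList with hl0
  set l := l0.insertionSort r with hl
  have hperm : l.Perm l0 := List.perm_insertionSort r l0
  have hnd : l.Nodup := hperm.nodup_iff.mpr (Finset.nodup_toList _)
  have hsorted : l.Pairwise r := List.pairwise_insertionSort r l0
  refine ⟨l.length, l.get, List.nodup_iff_injective_get.mp hnd, ?_, ?_⟩
  · ext z
    simp only [Set.mem_range]
    constructor
    · rintro ⟨i, rfl⟩
      have h1 : l.get i ∈ l := l.get_mem _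
      have h2 := hperm.mem_iff.mp h1
      rw [hl0] at h2
      exact hY.mem_toFinset.mp (Finset.mem_toList.mp h2)
    · intro hz
      have : z ∈ l := hperm.mem_iff.mpr
        (by rw [hl0]; exact Finset.mem_toList.mpr (hY.mem_toFinset.mpr hz))
      exact List.get_of_mem this
  · intro i k hik
    exact hsorted.rel_get_of_lt hik

end SortedEnum

section FreeGroupLemmas

lemma gen_mk (τ : ι) (m : Bool) :
    (cond m (FreeGroup.of τ) (FreeGroup.of τ)⁻¹) = FreeGroup.mk [(τ, m)] := by
  cases m
  · rw [show FreeGroup.of τ = FreeGroup.mk [(τ, true)] from rfl, FreeGroup.inv_mk]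
    simp [FreeGroup.invRev]
  · rfl

lemma gen_cancel [DecidableEq ι] (w : FreeGroup ι) (τ : ι) (m : Bool)
    (h : ((cond m (FreeGroup.of τ) (FreeGroup.of τ)⁻¹) * w).norm ≤ w.norm) :
    ∃ hd tl, w.toWord = hd :: tl ∧ τ = hd.1 ∧ m = !hd.2 := by
  rw [gen_mk] at h
  conv_lhs at h => rw [← FreeGroup.mk_toWord (x := w)]
  rw [FreeGroup.mul_mk] at h
  have hn : (FreeGroup.mk ((τ, m) :: w.toWord)).norm
      = (FreeGroup.reduce ((τ, m) :: w.toWord)).length := by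
    show (FreeGroup.toWord _).length = _
    rw [FreeGroup.toWord_mk]
  have hnw : w.norm = w.toWord.length := rfl
  rw [List.singleton_append, hn, FreeGroup.reduce.cons, FreeGroup.reduce_toWord, hnw] at h
  rcases htw : w.toWord with _ | ⟨hd, tl⟩
  · rw [htw] at h; simp at h
  · rw [htw] at h
    by_cases hc : (τ, m).1 = hd.1 ∧ (τ, m).2 = !hd.2
    · exact ⟨hd, tl, rfl, hc.1, hc.2⟩
    · exfalso; simp [hc] at h

lemma gen_cancel_unique [DecidableEq ι] (w : FreeGroup ι) (τ₁ τ₂ : ι) (m₁ m₂ : Bool)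
    (h1 : ((cond m₁ (FreeGroup.of τ₁) (FreeGroup.of τ₁)⁻¹) * w).norm ≤ w.norm)
    (h2 : ((cond m₂ (FreeGroup.of τ₂) (FreeGroup.of τ₂)⁻¹) * w).norm ≤ w.norm) :
    τ₁ = τ₂ ∧ m₁ = m₂ := by
  obtain ⟨hd, tl, e1, ht1, hm1⟩ := gen_cancel w τ₁ m₁ h1
  obtain ⟨hd', tl', e2, ht2, hm2⟩ := gen_cancel w τ₂ m₂ h2
  rw [e1] at e2
  obtain ⟨rfl, rfl⟩ : hd = hd' ∧ tl = tl' :=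
    ⟨(List.cons.injEq _ _ _ _ ▸ e2 :).1, (List.cons.injEq _ _ _ _ ▸ e2 :).2⟩
  exact ⟨ht1.trans ht2.symm, hm1.trans hm2.symm⟩

end FreeGroupLemmas

section ExistsLabels

/-- Definitions copied from the problem statement are referenced via the root namespace. -/
lemma exists_labels {n : ℕ} (b : Fin n → α) (A : Set ι)
    (f f' : ι → α → α)
    (hinv : ∀ τ ∈ A, ∀ k : Fin n, f' τ (f τ (b k)) = b k)
    (hsept : AutoSepTuple (fun τ : ↥A => f τ.1) (fun τ : ↥A => f' τ.1) b) :
    ∃ v : Fin n → FreeGroup ι,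
      ∀ τ ∈ A, ∀ i k : Fin n, f τ (b i) = b k → FreeGroup.of τ * v i = v k := by
  classical
  set Q : ℕ → ℕ × Bool × ι → Prop := fun k p =>
    p.1 < k ∧ ∃ (hk : k < n) (hi : p.1 < n), p.2.2 ∈ A ∧
      cond p.2.1 (f p.2.2 (b ⟨k, hk⟩)) (f' p.2.2 (b ⟨k, hk⟩)) = b ⟨p.1, hi⟩ with hQ
  set pick : ℕ → Option (ℕ × Bool × ι) := fun k => if h : ∃ p, Q k p then some h.choose else none
    with hpickdef
  refine ⟨fun k => vl pick k.1, ?_⟩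
  intro τ hτ i k hik
  rcases lt_trichotomy (i : ℕ) (k : ℕ) with hlt | heq | hgt
  · -- i < k : position k has the triple (i, false, τ)
    have hq : ∃ p, Q k.1 p := by
      refine ⟨(i.1, false, τ), hlt, k.2, i.2, hτ, ?_⟩
      simp only [cond, Fin.eta]
      rw [← hik]
      exact hinv τ hτ i
    have hpk : pick k.1 = some hq.choose := by rw [hpickdef]; exact dif_pos hq
    obtain ⟨hplt, hkn, hin, hpA, hpeq⟩ := hq.choose_spec
    have huniq := hsept.2 k ⟨hq.choose.1, hin⟩ i hq.choose.2.1 false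
      ⟨hq.choose.2.2, hpA⟩ ⟨τ, hτ⟩ hplt hlt
      (by simpa [Fin.eta] using hpeq)
      (by simp only [cond]; rw [← hik]; exact hinv τ hτ i)
    obtain ⟨hieq, hmeq, hτeq⟩ := huniq
    have hieq' : hq.choose.1 = i.1 := congrArg Fin.val hieq
    have hτeq' : hq.choose.2.2 = τ := congrArg Subtype.val hτeq
    have := vl_some pick (i := hq.choose.1) (m := hq.choose.2.1) (τ := hq.choose.2.2)
      hplt (by rw [hpk])
    rw [hmeq, hieq', hτeq'] at this
    simpa using this.symm
  · -- i = k : contradiction with separation (no fixed points)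
    have : i = k := Fin.ext heq
    subst this
    exact absurd hik (hsept.1 i ⟨τ, hτ⟩)
  · -- k < i : position i has the triple (k, true, τ)
    have hq : ∃ p, Q i.1 p := by
      refine ⟨(k.1, true, τ), hgt, i.2, k.2, hτ, ?_⟩
      simpa [Fin.eta] using hik
    have hpk : pick i.1 = some hq.choose := by rw [hpickdef]; exact dif_pos hq
    obtain ⟨hplt, hkn, hin, hpA, hpeq⟩ := hq.choose_spec
    have huniq := hsept.2 i ⟨hq.choose.1, hin⟩ k hq.choose.2.1 true
      ⟨hq.choose.2.2, hpA⟩ ⟨τ, hτ⟩ hplt hgt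
      (by simpa [Fin.eta] using hpeq)
      (by simpa [Fin.eta] using hik)
    obtain ⟨hieq, hmeq, hτeq⟩ := huniq
    have hieq' : hq.choose.1 = k.1 := congrArg Fin.val hieq
    have hτeq' : hq.choose.2.2 = τ := congrArg Subtype.val hτeq
    have := vl_some pick (i := hq.choose.1) (m := hq.choose.2.1) (τ := hq.choose.2.2)
      hplt (by rw [hpk])
    rw [hmeq, hieq', hτeq'] at this
    show FreeGroup.of τ * vl pick i.1 = vl pick k.1
    rw [this]
    simp

end ExistsLabels

section Master

lemma master [Countable ι]
    (X : Set α) (hXlev : ∀ x ∈ X, T.height x = γ + 1)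
    (hXdrop : Set.InjOn (fun x => T.restrict x γ) X)
    (f f' : ι → α → α) (hf : ∀ τ, IsTreeAuto T γ (f τ) (f' τ))
    (A : Set ι)
    (c : ι → FreeGroup ι) (v : α → FreeGroup ι)
    (hK : ∀ τ ∈ A, ∀ x ∈ X, ∀ y ∈ X,
      f τ (T.restrict x γ) = T.restrict y γ → c τ * v x = v y) :
    ∃ g g' : ι → α → α,
      (∀ τ, IsTreeAuto T (γ + 1) (g τ) (g' τ)) ∧
      (∀ τ, AutoExtends T γ (f τ) (f' τ) (g τ) (g' τ)) ∧
      (∀ τ ∈ A, AutoConsistentSet T (g τ) γ X) ∧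
      ((∀ τ, c τ = FreeGroup.of τ) → AutoSeparated T (γ + 1) g g') := by
  classical
  obtain ⟨E, hE⟩ := exists_E T γ X hXlev hXdrop v
  have hf1 : ∀ τ (x : α), T.height x ≤ γ → T.height (f τ x) = T.height x := fun τ => (hf τ).1
  have hf2 : ∀ τ (x : α), T.height x ≤ γ → T.height (f' τ x) = T.height x := fun τ => (hf τ).2.1
  set c' : ι → FreeGroup ι := fun τ => (c τ)⁻¹ with hc'
  refine ⟨gmap T γ E f hf1 c, gmap T γ E f' hf2 c', ?_, ?_, ?_, ?_⟩
  · intro τ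
    refine ⟨gmap_height T γ E f hf1 c τ, gmap_height T γ E f' hf2 c' τ, ?_, ?_, ?_, ?_⟩
    · exact fun x hx => gmap_inv T γ E f hf1 c f' hf2 c'
        (fun τ x h => (hf τ).2.2.1 x h) (fun τ w => inv_mul_cancel_left _ _) τ x hx
    · exact fun x hx => gmap_inv T γ E f' hf2 c' f hf1 c
        (fun τ x h => (hf τ).2.2.2.1 x h) (fun τ w => mul_inv_cancel_left _ _) τ x hx
    · exact fun x y hy hxy => gmap_mono T γ E f hf1 c
        (fun τ x y h hxy => (hf τ).2.2.2.2.1 x y h hxy) τ x y hy hxy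
    · exact fun x y hy hxy => gmap_mono T γ E f' hf2 c'
        (fun τ x y h hxy => (hf τ).2.2.2.2.2 x y h hxy) τ x y hy hxy
  · intro τ
    exact ⟨fun x hx => gmap_low T γ E f hf1 c τ x hx,
      fun x hx => gmap_low T γ E f' hf2 c' τ x hx⟩
  · intro τ hτ x hx y hy
    have hhx := hXlev x hx
    have hhy := hXlev y hy
    have hgx : gmap T γ E f hf1 c τ (T.restrict x γ) = f τ (T.restrict x γ) :=
      gmap_low T γ E f hf1 c τ _ (hres T γ hhx).le
    rw [hgx]
    have hcx : cs T γ ι E x = (v x, 0) := by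
      rw [cs_spec T γ E ⟨T.restrict x γ, hres T γ hhx⟩ x (self_mem_fib T γ hhx)]
      exact hE _ x hx _
    have hcy : cs T γ ι E y = (v y, 0) := by
      rw [cs_spec T γ E ⟨T.restrict y γ, hres T γ hhy⟩ y (self_mem_fib T γ hhy)]
      exact hE _ y hy _
    constructor
    · intro h
      apply (gmap_eq_iff T γ E f hf1 c τ x y hhx hhy).mpr
      refine ⟨h, ?_⟩
      rw [hcx, hcy]
      exact Prod.ext (hK τ hτ x hx y hy h).symm rfl
    · intro h
      exact ((gmap_eq_iff T γ E f hf1 c τ x y hhx hhy).mp h).1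
  · intro hc
    intro Y hYfin hYlev
    obtain ⟨n, a, hainj, harange, hsorted⟩ :=
      exists_sorted_enum (fun x => ((cs T γ ι E x).1).norm) Y hYfin
    have hah : ∀ k : Fin n, T.height (a k) = γ + 1 := fun k =>
      hYlev (a k) (harange ▸ Set.mem_range_self k)
    refine ⟨n, a, hainj, harange, ?_, ?_⟩
    · intro k τ hcontr
      have h := gmap_norm_key T γ E f hf1 c τ (a k) (a k) (hah k) (hah k) hcontr
      rw [hc τ] at h
      exact FreeGroup.of_ne_one τ (right_eq_mul.mp h)
    · intro k i1 i2 m1 m2 τ1 τ2 hi1 hi2 e1 e2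
      have w1 : (cs T γ ι E (a i1)).1
          = (cond m1 (FreeGroup.of τ1) (FreeGroup.of τ1)⁻¹) * (cs T γ ι E (a k)).1 := by
        cases m1
        · have := gmap_norm_key T γ E f' hf2 c' τ1 (a k) (a i1) (hah k) (hah i1) e1
          rw [this]; simp [hc', hc τ1]
        · have := gmap_norm_key T γ E f hf1 c τ1 (a k) (a i1) (hah k) (hah i1) e1
          rw [this]; simp [hc τ1]
      have w2 : (cs T γ ι E (a i2)).1
          = (cond m2 (FreeGroup.of τ2) (FreeGroup.of τ2)⁻¹) * (cs T γ ι E (a k)).1 := by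
        cases m2
        · have := gmap_norm_key T γ E f' hf2 c' τ2 (a k) (a i2) (hah k) (hah i2) e2
          rw [this]; simp [hc', hc τ2]
        · have := gmap_norm_key T γ E f hf1 c τ2 (a k) (a i2) (hah k) (hah i2) e2
          rw [this]; simp [hc τ2]
      have hn1 : ((cond m1 (FreeGroup.of τ1) (FreeGroup.of τ1)⁻¹) * (cs T γ ι E (a k)).1).norm
          ≤ ((cs T γ ι E (a k)).1).norm := by
        rw [← w1]; exact hsorted i1 k hi1
      have hn2 : ((cond m2 (FreeGroup.of τ2) (FreeGroup.of τ2)⁻¹) * (cs T γ ι E (a k)).1).norm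
          ≤ ((cs T γ ι E (a k)).1).norm := by
        rw [← w2]; exact hsorted i2 k hi2
      obtain ⟨hτeq, hmeq⟩ := gen_cancel_unique _ τ1 τ2 m1 m2 hn1 hn2
      subst hτeq; subst hmeq
      exact ⟨hainj (e1.symm.trans e2), rfl, rfl⟩

end Master

end L514

/-- Lemma 5.14: one-step extension of a countable family of automorphisms,
consistent on a prescribed finite set `X ⊆ T_{γ+1}`, which is separated
provided the subfamily indexed by `A` was separated on `X↾γ`. -/
theorem auto_family_one_step_extension
    (T : OmegaOneTree α) (γ : Ordinal) (hγ : γ < omega1)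
    (X : Set α) (hXfin : X.Finite) (hXlev : ∀ x ∈ X, T.height x = γ + 1)
    (hXdrop : Set.InjOn (fun x => T.restrict x γ) X)
    {ι : Type} [Countable ι] (f f' : ι → α → α)
    (hf : ∀ τ, IsTreeAuto T γ (f τ) (f' τ))
    (A : Set ι) (hAfin : A.Finite) :
    ∃ g g' : ι → α → α,
      (∀ τ, IsTreeAuto T (γ + 1) (g τ) (g' τ)) ∧
      (∀ τ, AutoExtends T γ (f τ) (f' τ) (g τ) (g' τ)) ∧
      (∀ τ ∈ A, AutoConsistentSet T (g τ) γ X) ∧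
      (AutoSepSet (fun τ : ↥A => f τ.1) (fun τ : ↥A => f' τ.1)
          ((fun x => T.restrict x γ) '' X) →
        AutoSeparated T (γ + 1) g g') := by
  classical
  by_cases hs : AutoSepSet (fun τ : ↥A => f τ.1) (fun τ : ↥A => f' τ.1)
      ((fun x => T.restrict x γ) '' X)
  · obtain ⟨n, b, hbinj, hbrange, hbsep⟩ := hs
    have hbmem : ∀ k : Fin n, ∃ x ∈ X, T.restrict x γ = b k := by
      intro k
      have : b k ∈ Set.range b := Set.mem_range_self k
      rw [hbrange] at this
      obtain ⟨x, hx, he⟩ := this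
      exact ⟨x, hx, he⟩
    have hbh : ∀ k : Fin n, T.height (b k) = γ := by
      intro k
      obtain ⟨x, hx, he⟩ := hbmem k
      rw [← he]
      exact L514.hres T γ (hXlev x hx)
    have hinv : ∀ τ ∈ A, ∀ k : Fin n, f' τ (f τ (b k)) = b k :=
      fun τ _ k => (hf τ).2.2.1 _ (hbh k).le
    obtain ⟨vb, hvb⟩ := L514.exists_labels b A f f' hinv hbsep
    set v : α → FreeGroup ι :=
      fun x => if h : ∃ k : Fin n, b k = T.restrict x γ then vb h.choose else 1 with hvdef
    have hK : ∀ τ ∈ A, ∀ x ∈ X, ∀ y ∈ X,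
        f τ (T.restrict x γ) = T.restrict y γ → FreeGroup.of τ * v x = v y := by
      intro τ hτ x hx y hy he
      have hxk : ∃ k, b k = T.restrict x γ := by
        have : T.restrict x γ ∈ Set.range b := by
          rw [hbrange]; exact ⟨x, hx, rfl⟩
        exact this
      have hyk : ∃ k, b k = T.restrict y γ := by
        have : T.restrict y γ ∈ Set.range b := by
          rw [hbrange]; exact ⟨y, hy, rfl⟩
        exact this
      rw [hvdef]
      dsimp only
      rw [dif_pos hxk, dif_pos hyk]
      apply hvb τ hτ
      rw [hxk.choose_spec, hyk.choose_spec]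
      exact he
    obtain ⟨g, g', h1, h2, h3, h4⟩ :=
      L514.master T γ X hXlev hXdrop f f' hf A FreeGroup.of v hK
    exact ⟨g, g', h1, h2, h3, fun _ => h4 (fun τ => rfl)⟩
  · obtain ⟨g, g', h1, h2, h3, _⟩ :=
      L514.master T γ X hXlev hXdrop f f' hf A (fun _ => 1) (fun _ => 1)
        (by intro τ _ x _ y _ _; simp)
    exact ⟨g, g', h1, h2, h3, fun hcontr => absurd hcontr hs⟩
end
end

section
/- Assume α < δ < ω₁, X ⊆ T_δ is finite with unique drop-downs to α, {f_τ : τ ∈ I} is a countable indexed family of automorphisms of T↾(α+1), and A ⊆ I is finite. Then there exists an indexed family {g_τ : τ ∈ I} of automorphisms of T↾(δ+1) such that: (1) f_τ ⊆ g_τ for all τ ∈ I; (2) for all τ ∈ A, X↾α and X are g_τ-consistent; and (3) if {f_τ : τ ∈ A} is separated on X↾α, then {g_τ : τ ∈ I} is separated. -/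
noncomputable section

variable {α : Type} [PartialOrder α]

namespace AFE

open Classical

variable {α : Type} [PartialOrder α] (T : OmegaOneTree α)

lemma restrict_self {x : α} {β : Ordinal} (h : T.height x = β) : T.restrict x β = x :=
  T.restrict_eq le_rfl h

lemma lt_of_le_of_height_lt {x y : α} (hle : x ≤ y) (hh : T.height x < T.height y) : x < y :=
  lt_of_le_of_ne hle (fun h => absurd (h ▸ hh) (lt_irrefl _))

lemma restrict_lt {x : α} {β : Ordinal} (h : β ≤ T.height x) (hne : β ≠ T.height x) :
    T.restrict x β < x :=
  lt_of_le_of_height_lt T (T.restrict_le x h)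
    (by rw [T.height_restrict x h]; exact lt_of_le_of_ne h hne)

lemma restrict_restrict {x : α} {β γ : Ordinal} (hγβ : γ ≤ β) (hβ : β ≤ T.height x) :
    T.restrict (T.restrict x β) γ = T.restrict x γ := by
  have h1 : T.restrict (T.restrict x β) γ ≤ x :=
    le_trans (T.restrict_le _ (by rw [T.height_restrict x hβ]; exact hγβ)) (T.restrict_le x hβ)
  have h2 : γ ≤ T.height (T.restrict x β) := by rw [T.height_restrict x hβ]; exact hγβ
  exact (T.restrict_eq h1 (T.height_restrict _ h2)).symm

lemma restrict_restrict' {x : α} {β γ : Ordinal} (hγβ : γ ≤ β) (hβ : β ≤ T.height x) :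
    T.restrict x γ = T.restrict (T.restrict x β) γ := (restrict_restrict T hγβ hβ).symm

/-- restriction of a smaller element below a bigger one -/
lemma restrict_of_le {x y : α} {β : Ordinal} (hxy : x ≤ y) (hx : T.height x = β) :
    T.restrict y β = x := T.restrict_eq hxy hx

lemma restrict_lt_restrict {x : α} {β γ : Ordinal} (hβγ : β < γ) (hγ : γ ≤ T.height x) :
    T.restrict x β < T.restrict x γ := by
  rw [← restrict_restrict T (le_of_lt hβγ) hγ]
  exact restrict_lt T (by rw [T.height_restrict x hγ]; exact le_of_lt hβγ)
    (by rw [T.height_restrict x hγ]; exact ne_of_lt hβγ)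

lemma comparable_of_le_of_le {x y z : α} (hxz : x ≤ z) (hyz : y ≤ z)
    (hxy : T.height x ≤ T.height y) : x ≤ y := by
  rcases eq_or_lt_of_le hxz with rfl | hxz
  · rcases eq_or_lt_of_le hyz with rfl | h
    · exact le_rfl
    · exact absurd (T.height_strictMono h) (not_lt_of_ge hxy)
  · rcases eq_or_lt_of_le hyz with rfl | hyz
    · exact le_of_lt hxz
    · rcases T.pred_linear hxz hyz with h | h
      · exact h
      · rcases eq_or_lt_of_le h with rfl | h2
        · exact le_rfl
        · exact absurd (T.height_strictMono h2) (not_lt_of_ge hxy)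

lemma restrict_le_of_le {x y : α} {β : Ordinal} (hxy : x ≤ y) (hβ : β ≤ T.height x) :
    T.restrict x β = T.restrict y β := by
  refine (T.restrict_eq (le_trans (T.restrict_le x hβ) hxy) (T.height_restrict x hβ)).symm

end AFE
namespace AFE

open Classical

variable {α : Type} [PartialOrder α] (T : OmegaOneTree α)

/-- The splitting level of two distinct nodes. -/
def split (a b : α) : Ordinal := sInf {β : Ordinal | T.restrict a β ≠ T.restrict b β}

section Split

variable {δ : Ordinal} {a b : α} (ha : T.height a = δ) (hb : T.height b = δ)

include ha hb

lemma split_nonempty (hne : a ≠ b) : {β : Ordinal | T.restrict a β ≠ T.restrict b β}.Nonempty :=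
  ⟨δ, show T.restrict a δ ≠ T.restrict b δ by rw [restrict_self T ha, restrict_self T hb]; exact hne⟩

lemma split_mem (hne : a ≠ b) : T.restrict a (split T a b) ≠ T.restrict b (split T a b) :=
  csInf_mem (split_nonempty T ha hb hne)

lemma split_le (hne : a ≠ b) : split T a b ≤ δ :=
  csInf_le (OrderBot.bddBelow _)
    (show T.restrict a δ ≠ T.restrict b δ by rw [restrict_self T ha, restrict_self T hb]; exact hne)

omit ha hb

lemma Ag_of_lt_split {β : Ordinal} (h : β < split T a b) : T.restrict a β = T.restrict b β := by
  by_contra hc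
  exact absurd (csInf_le (OrderBot.bddBelow _)
    (show _ ∈ {β : Ordinal | T.restrict a β ≠ T.restrict b β} from hc)) (not_le_of_gt h)

include ha hb

lemma lt_split_of_Ag {β : Ordinal} (hβ : β ≤ δ) (hAg : T.restrict a β = T.restrict b β)
    (hne : a ≠ b) : β < split T a b := by
  by_contra hc
  push_neg at hc
  refine split_mem T ha hb hne ?_
  calc T.restrict a (split T a b) = T.restrict (T.restrict a β) (split T a b) :=
        (restrict_restrict T hc (ha ▸ hβ)).symm
    _ = T.restrict (T.restrict b β) (split T a b) := by rw [hAg]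
    _ = T.restrict b (split T a b) := restrict_restrict T hc (hb ▸ hβ)

lemma Ag_iff_lt_split {β : Ordinal} (hβ : β ≤ δ) (hne : a ≠ b) :
    T.restrict a β = T.restrict b β ↔ β < split T a b :=
  ⟨fun h => lt_split_of_Ag T ha hb hβ h hne, fun h => Ag_of_lt_split T h⟩

lemma split_pos (hδ : (0:Ordinal) ≤ δ) (hne : a ≠ b) : 0 < split T a b := by
  obtain ⟨r, hr0, hrle⟩ := T.root_exists
  exact lt_split_of_Ag T ha hb hδ
    (by rw [restrict_of_le T (hrle a) hr0, restrict_of_le T (hrle b) hr0]) hne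

lemma split_is_succ (hne : a ≠ b) : ∃ γ, split T a b = γ + 1 := by
  rcases Ordinal.zero_or_succ_or_isSuccLimit (split T a b) with h0 | hs | hl
  · exact absurd (h0 ▸ split_pos T ha hb (zero_le (a := δ)) hne) (lt_irrefl _)
  · obtain ⟨γ, hγ⟩ := hs; exact ⟨γ, by rw [← hγ, Ordinal.add_one_eq_succ]⟩
  · exfalso
    set s := split T a b with hsdef
    have hsle : s ≤ δ := split_le T ha hb hne
    have hx : T.height (T.restrict a s) = s := T.height_restrict a (ha ▸ hsle)
    have hy : T.height (T.restrict b s) = s := T.height_restrict b (hb ▸ hsle)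
    refine split_mem T ha hb hne (T.limit_eq (hx.trans hy.symm) (hx ▸ hl) ?_)
    intro z
    constructor
    · intro hz
      have hzh : T.height z < s := hx ▸ T.height_strictMono hz
      have hz1 : T.restrict a (T.height z) = z := by
        rw [restrict_restrict' T (le_of_lt hzh) (ha ▸ hsle)]
        exact restrict_of_le T (le_of_lt hz) rfl
      have hz2 : T.restrict b (T.height z) = z := by rw [← Ag_of_lt_split T hzh]; exact hz1
      calc z = T.restrict (T.restrict b s) (T.height z) := by
            rw [restrict_restrict T (le_of_lt hzh) (hb ▸ hsle)]; exact hz2.symm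
        _ < T.restrict b s := restrict_lt T (by rw [hy]; exact le_of_lt hzh) (by rw [hy]; exact ne_of_lt hzh)
    · intro hz
      have hzh : T.height z < s := hy ▸ T.height_strictMono hz
      have hz2 : T.restrict b (T.height z) = z := by
        rw [restrict_restrict' T (le_of_lt hzh) (hb ▸ hsle)]
        exact restrict_of_le T (le_of_lt hz) rfl
      have hz1 : T.restrict a (T.height z) = z := by rw [Ag_of_lt_split T hzh]; exact hz2
      calc z = T.restrict (T.restrict a s) (T.height z) := by
            rw [restrict_restrict T (le_of_lt hzh) (ha ▸ hsle)]; exact hz1.symm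
        _ < T.restrict a s := restrict_lt T (by rw [hx]; exact le_of_lt hzh) (by rw [hx]; exact ne_of_lt hzh)

end Split

section Aut

variable {lo : Ordinal} {f f' : α → α} (hf : IsTreeAuto T lo f f')

include hf

lemma aut_restrict_comm {x : α} {β : Ordinal} (hx : T.height x ≤ lo) (hβ : β ≤ T.height x) :
    f (T.restrict x β) = T.restrict (f x) β := by
  rcases eq_or_lt_of_le hβ with rfl | hβ'
  · rw [restrict_self T rfl, restrict_self T (hf.1 x hx)]
  · have h1 : T.restrict x β < x := restrict_lt T hβ (ne_of_lt hβ')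
    have h2 : f (T.restrict x β) < f x := hf.2.2.2.2.1 _ x hx h1
    exact (restrict_of_le T (le_of_lt h2)
      (hf.1 _ (le_trans (le_of_eq (T.height_restrict x hβ)) (le_trans hβ hx)) |>.trans
        (T.height_restrict x hβ))).symm

lemma aut_inj {x y : α} (hx : T.height x ≤ lo) (hy : T.height y ≤ lo) (h : f x = f y) : x = y := by
  have h1 := hf.2.2.1 x hx
  have h2 := hf.2.2.1 y hy
  rw [← h1, ← h2, h]

lemma aut_Ag {a b : α} (ha : T.height a = lo) (hb : T.height b = lo) {β : Ordinal} (hβ : β ≤ lo) :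
    T.restrict a β = T.restrict b β ↔ T.restrict (f a) β = T.restrict (f b) β := by
  constructor
  · intro h
    rw [← aut_restrict_comm T hf (le_of_eq ha) (ha ▸ hβ), ← aut_restrict_comm T hf (le_of_eq hb) (hb ▸ hβ), h]
  · intro h
    rw [← aut_restrict_comm T hf (le_of_eq ha) (ha ▸ hβ), ← aut_restrict_comm T hf (le_of_eq hb) (hb ▸ hβ)] at h
    exact aut_inj T hf (le_trans (le_of_eq (T.height_restrict a (ha ▸ hβ))) hβ)
      (le_trans (le_of_eq (T.height_restrict b (hb ▸ hβ))) hβ) h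

/-- the inverse pair is also an automorphism -/
lemma aut_symm : IsTreeAuto T lo f' f :=
  ⟨hf.2.1, hf.1, hf.2.2.2.1, hf.2.2.1, hf.2.2.2.2.2, hf.2.2.2.2.1⟩

end Aut

end AFE
namespace AFE

open Classical

variable {α : Type} [PartialOrder α] (T : OmegaOneTree α)

lemma Ag_mono {δ : Ordinal} {a b : α} (ha : T.height a = δ) (hb : T.height b = δ)
    {β γ : Ordinal} (hγβ : γ ≤ β) (hβ : β ≤ δ) (h : T.restrict a β = T.restrict b β) :
    T.restrict a γ = T.restrict b γ := by
  rw [restrict_restrict' T hγβ (ha ▸ hβ), restrict_restrict' T (x := b) hγβ (hb ▸ hβ), h]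

lemma pick {δ : Ordinal} (hδ : δ < omega1) (u : α) {γ : Ordinal} (hu : T.height u = γ)
    (hγδ : γ + 1 ≤ δ) (F' : Set α) (hF' : F'.Finite) :
    ∃ y, T.height y = δ ∧ T.restrict y γ = u ∧
      ∀ t ∈ F', T.restrict y (γ+1) ≠ T.restrict t (γ+1) := by
  have hsucc : {v : α | u < v ∧ T.height v = T.height u + 1}.Infinite := T.splitting u
  have hForb : ((fun t => T.restrict t (γ+1)) '' F').Finite := hF'.image _
  obtain ⟨v, hv⟩ := (hsucc.diff hForb).nonempty
  obtain ⟨⟨huv, hvh⟩, hvF⟩ := hv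
  rw [hu] at hvh
  have hrvγ : T.restrict v γ = u := restrict_of_le T (le_of_lt huv) hu
  have hrv1 : T.restrict v (γ+1) = v := restrict_self T hvh
  rcases eq_or_lt_of_le hγδ with heq | hlt
  · refine ⟨v, heq ▸ hvh, hrvγ, ?_⟩
    intro t ht hc
    exact hvF ⟨t, ht, show T.restrict t (γ+1) = v by rw [← hc, hrv1]⟩
  · obtain ⟨y, hvy, hyh⟩ := T.exists_above v (by rw [hvh]; exact hlt) hδ
    have hry1 : T.restrict y (γ+1) = v := restrict_of_le T (le_of_lt hvy) hvh
    refine ⟨y, hyh, ?_, ?_⟩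
    · rw [restrict_restrict' T (le_of_lt (lt_add_one γ)) (hyh ▸ hγδ), hry1, hrvγ]
    · intro t ht hc
      exact hvF ⟨t, ht, show T.restrict t (γ+1) = v by rw [← hc, hry1]⟩

lemma key {lo δ : Ordinal} (hloδ : lo < δ) (hδ : δ < omega1)
    {f f' : α → α} (hf : IsTreeAuto T lo f f')
    (p : Set (α × α)) (hfin : p.Finite)
    (hS1 : ∀ q ∈ p, T.height q.1 = δ) (hS2 : ∀ q ∈ p, T.height q.2 = δ)
    (hbd : ∀ q ∈ p, f (T.restrict q.1 lo) = T.restrict q.2 lo)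
    (hAg : ∀ q ∈ p, ∀ q' ∈ p, ∀ β ≤ δ,
      (T.restrict q.1 β = T.restrict q'.1 β ↔ T.restrict q.2 β = T.restrict q'.2 β))
    {xs : α} (hxs : T.height xs = δ) (hxdom : ∀ q ∈ p, q.1 ≠ xs)
    (F : Set α) (hF : F.Finite) (hxsF : xs ∈ F) (hranF : ∀ q ∈ p, q.2 ∈ F) :
    ∃ ys, T.height ys = δ ∧ ys ∉ F ∧ T.restrict ys lo = f (T.restrict xs lo) ∧
      ∀ q ∈ p, ∀ β ≤ δ, (T.restrict xs β = T.restrict q.1 β ↔ T.restrict ys β = T.restrict q.2 β) := by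
  have hlo1δ : lo + 1 ≤ δ := by
    rw [Ordinal.add_one_eq_succ, Order.succ_le_iff]; exact hloδ
  have hloδ' : lo ≤ δ := le_of_lt hloδ
  have hfxlo : T.height (f (T.restrict xs lo)) = lo :=
    (hf.1 _ (le_of_eq (T.height_restrict xs (hxs ▸ hloδ')))).trans (T.height_restrict xs (hxs ▸ hloδ'))
  -- case split on existence of a pair with split > lo
  by_cases hbig : ∃ q₀ ∈ p, lo < split T xs q₀.1 ∧ ∀ q ∈ p, split T xs q.1 ≤ split T xs q₀.1
  · -- CASE B
    obtain ⟨q₀, hq₀, hs₀lo, hs₀max⟩ := hbig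
    have hq₀ne : xs ≠ q₀.1 := fun h => hxdom q₀ hq₀ h.symm
    have hq₀1 := hS1 q₀ hq₀
    have hq₀2 := hS2 q₀ hq₀
    obtain ⟨γ, hγ⟩ := split_is_succ T hxs hq₀1 hq₀ne
    have hs₀δ : split T xs q₀.1 ≤ δ := split_le T hxs hq₀1 hq₀ne
    have hγδ : γ + 1 ≤ δ := hγ ▸ hs₀δ
    have hloγ : lo ≤ γ := by
      have := hγ ▸ hs₀lo
      rwa [Ordinal.add_one_eq_succ, Order.lt_succ_iff] at this
    have hγδ' : γ ≤ δ := le_trans (le_of_lt (lt_add_one γ)) hγδ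
    have hu : T.height (T.restrict q₀.2 γ) = γ := T.height_restrict _ (hq₀2 ▸ hγδ')
    obtain ⟨y, hyh, hyγ, hyF⟩ := pick T hδ _ hu hγδ F hF
    have hynF : y ∉ F := fun hc => hyF y hc rfl
    refine ⟨y, hyh, hynF, ?_, ?_⟩
    · -- boundary
      have h1 : T.restrict y lo = T.restrict q₀.2 lo := by
        rw [restrict_restrict' T hloγ (hyh ▸ hγδ'), hyγ, restrict_restrict T hloγ (hq₀2 ▸ hγδ')]
      have h2 : T.restrict xs lo = T.restrict q₀.1 lo := Ag_of_lt_split T hs₀lo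
      rw [h1, ← hbd q₀ hq₀, h2]
    · intro q hq β hβ
      have hqne : xs ≠ q.1 := fun h => hxdom q hq h.symm
      have hq1 := hS1 q hq
      have hq2 := hS2 q hq
      set d := split T xs q.1 with hd
      have hdmax : d ≤ γ + 1 := hγ ▸ hs₀max q hq
      have hyAgq₀ : ∀ β' ≤ γ, T.restrict y β' = T.restrict q₀.2 β' := by
        intro β' hβ'
        rw [restrict_restrict' T hβ' (hyh ▸ hγδ'), hyγ, restrict_restrict T hβ' (hq₀2 ▸ hγδ')]
      rcases lt_or_ge β d with hβd | hβd
      · -- both sides true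
        have hβγ : β ≤ γ := by
          have : β < γ + 1 := lt_of_lt_of_le hβd hdmax
          rwa [Ordinal.add_one_eq_succ, Order.lt_succ_iff] at this
        have h1 : T.restrict xs β = T.restrict q.1 β := Ag_of_lt_split T hβd
        have h2 : T.restrict xs β = T.restrict q₀.1 β :=
          Ag_of_lt_split T (lt_of_le_of_lt hβγ (hγ ▸ lt_add_one γ))
        have h3 : T.restrict q₀.1 β = T.restrict q.1 β := by rw [← h2, h1]
        have h4 : T.restrict q₀.2 β = T.restrict q.2 β := (hAg q₀ hq₀ q hq β hβ).mp h3
        simp only [h1, true_iff]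
        rw [hyAgq₀ β hβγ, h4]
      · -- both sides false
        have hL : ¬ T.restrict xs β = T.restrict q.1 β := by
          intro hc
          exact absurd (lt_split_of_Ag T hxs hq1 hβ hc hqne) (not_lt_of_ge hβd)
        have hR : ¬ T.restrict y β = T.restrict q.2 β := by
          intro hc
          have hcd : T.restrict y d = T.restrict q.2 d :=
            Ag_mono T hyh hq2 hβd hβ hc
          rcases eq_or_lt_of_le hdmax with hde | hdγ
          · -- d = γ + 1 : contradicts avoidance
            rw [hde] at hcd
            exact hyF q.2 (hranF q hq) hcd
          · have hdγ' : d ≤ γ := by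
              rwa [Ordinal.add_one_eq_succ, Order.lt_succ_iff] at hdγ
            have h2 : T.restrict xs d = T.restrict q₀.1 d :=
              Ag_of_lt_split T (lt_of_le_of_lt hdγ' (hγ ▸ lt_add_one γ))
            have hnd : ¬ T.restrict xs d = T.restrict q.1 d := split_mem T hxs hq1 hqne
            have h3 : ¬ T.restrict q₀.1 d = T.restrict q.1 d := by rw [← h2]; exact hnd
            have h4 : ¬ T.restrict q₀.2 d = T.restrict q.2 d :=
              fun hc2 => h3 ((hAg q₀ hq₀ q hq d (le_trans hdγ' hγδ')).mpr hc2)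
            rw [hyAgq₀ d hdγ'] at hcd
            exact h4 hcd
        exact iff_of_false hL hR
  · -- CASE A : all splits ≤ lo (or p empty)
    have hsmall : ∀ q ∈ p, split T xs q.1 ≤ lo := by
      intro q hq
      by_contra hc
      push_neg at hc
      -- get a maximal one among those, contradiction with hbig
      obtain ⟨q₀, hq₀, hmax⟩ := Set.Finite.exists_maximalFor (fun q => split T xs q.1) p hfin ⟨q, hq⟩
      have hmax' : ∀ q' ∈ p, split T xs q'.1 ≤ split T xs q₀.1 := by
        intro q' hq'
        rcases le_or_gt (split T xs q'.1) (split T xs q₀.1) with h | h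
        · exact h
        · exact hmax hq' (le_of_lt h)
      exact hbig ⟨q₀, hq₀, lt_of_lt_of_le hc (hmax' q hq), hmax'⟩
    obtain ⟨y, hyh, hylo, hyF⟩ := pick T hδ _ hfxlo hlo1δ F hF
    have hynF : y ∉ F := fun hc => hyF y hc rfl
    refine ⟨y, hyh, hynF, hylo, ?_⟩
    intro q hq β hβ
    have hqne : xs ≠ q.1 := fun h => hxdom q hq h.symm
    have hq1 := hS1 q hq
    have hq2 := hS2 q hq
    rcases le_or_gt β lo with hβlo | hβlo
    · -- use aut_Ag
      have e1 : T.restrict xs β = T.restrict (T.restrict xs lo) β :=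
        restrict_restrict' T hβlo (hxs ▸ hloδ')
      have e2 : T.restrict q.1 β = T.restrict (T.restrict q.1 lo) β :=
        restrict_restrict' T hβlo (hq1 ▸ hloδ')
      have e3 : T.restrict y β = T.restrict (f (T.restrict xs lo)) β := by
        rw [restrict_restrict' T hβlo (hyh ▸ hloδ'), hylo]
      have e4 : T.restrict q.2 β = T.restrict (f (T.restrict q.1 lo)) β := by
        rw [restrict_restrict' T hβlo (hq2 ▸ hloδ'), hbd q hq]
      rw [e1, e2, e3, e4]
      exact aut_Ag T hf (T.height_restrict xs (hxs ▸ hloδ')) (T.height_restrict q.1 (hq1 ▸ hloδ')) hβlo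
    · -- both sides false
      have hL : ¬ T.restrict xs β = T.restrict q.1 β := by
        intro hc
        exact absurd (lt_split_of_Ag T hxs hq1 hβ hc hqne)
          (not_lt_of_ge (le_trans (hsmall q hq) (le_of_lt hβlo)))
      have hR : ¬ T.restrict y β = T.restrict q.2 β := by
        intro hc
        have hβ1 : lo + 1 ≤ β := by
          rw [Ordinal.add_one_eq_succ, Order.succ_le_iff]; exact hβlo
        have hcd : T.restrict y (lo+1) = T.restrict q.2 (lo+1) := Ag_mono T hyh hq2 hβ1 hβ hc
        exact hyF q.2 (hranF q hq) hcd
      exact iff_of_false hL hR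

end AFE
namespace AFE

open Classical

variable {α ι : Type} [PartialOrder α]

/-- A construction state: a family of finite partial maps and the list of mentioned nodes. -/
structure St (ι α : Type) where
  P : ι → Set (α × α)
  L : List α

/-- `Rel P m τ a b`: the pair witnessing `σ_τ^m (a) = b`. -/
def Rel (P : ι → Set (α × α)) (m : Bool) (τ : ι) (a b : α) : Prop :=
  (cond m (a, b) (b, a)) ∈ P τ

/-- Separation bookkeeping along the list of mentioned elements. -/
def SepOK (st : St ι α) : Prop :=
  (∀ (τ : ι) (a : α), (a, a) ∉ st.P τ) ∧
  ∀ (i₁ i₂ k : ℕ) (a b₁ b₂ : α) (m₁ m₂ : Bool) (τ₁ τ₂ : ι),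
    i₁ < k → i₂ < k → st.L[k]? = some a → st.L[i₁]? = some b₁ → st.L[i₂]? = some b₂ →
    Rel st.P m₁ τ₁ a b₁ → Rel st.P m₂ τ₂ a b₂ → b₁ = b₂ ∧ m₁ = m₂ ∧ τ₁ = τ₂

/-- The construction invariant. -/
structure Inv (T : OmegaOneTree α) (lo δ : Ordinal) (X : Set α)
    (f : ι → α → α) (A : Set ι) (Hs : Prop) (st : St ι α) : Prop where
  hts1 : ∀ τ, ∀ q ∈ st.P τ, T.height q.1 = δ
  hts2 : ∀ τ, ∀ q ∈ st.P τ, T.height q.2 = δ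
  bd : ∀ τ, ∀ q ∈ st.P τ, f τ (T.restrict q.1 lo) = T.restrict q.2 lo
  ag : ∀ τ, ∀ q ∈ st.P τ, ∀ q' ∈ st.P τ, ∀ β ≤ δ,
    (T.restrict q.1 β = T.restrict q'.1 β ↔ T.restrict q.2 β = T.restrict q'.2 β)
  memL : ∀ τ, ∀ q ∈ st.P τ, q.1 ∈ st.L ∧ q.2 ∈ st.L
  lev : ∀ z ∈ st.L, T.height z = δ
  nodup : st.L.Nodup
  XL : ∀ x ∈ X, x ∈ st.L
  forced1 : ∀ τ ∈ A, ∀ x ∈ X, ∀ y ∈ X, f τ (T.restrict x lo) = T.restrict y lo → (x, y) ∈ st.P τ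
  forced2 : ∀ τ ∈ A, ∀ x ∈ X, ∀ y ∈ X, (x, y) ∈ st.P τ → f τ (T.restrict x lo) = T.restrict y lo
  sep : Hs → SepOK st

def Extends (st st' : St ι α) : Prop :=
  (∀ τ, st.P τ ⊆ st'.P τ) ∧ st.L <+: st'.L

lemma Extends.rfl {st : St ι α} : Extends st st := ⟨fun _ => subset_rfl, List.prefix_rfl⟩

lemma Extends.trans {s1 s2 s3 : St ι α} (h1 : Extends s1 s2) (h2 : Extends s2 s3) :
    Extends s1 s3 :=
  ⟨fun τ => (h1.1 τ).trans (h2.1 τ), h1.2.trans h2.2⟩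

lemma Inv.Pfin {T : OmegaOneTree α} {lo δ : Ordinal} {X : Set α} {f : ι → α → α}
    {A : Set ι} {Hs : Prop} {st : St ι α} (h : Inv T lo δ X f A Hs st) (τ : ι) :
    (st.P τ).Finite := by
  refine Set.Finite.subset ((st.L.finite_toSet).prod (st.L.finite_toSet)) ?_
  intro q hq
  exact ⟨(h.memL τ q hq).1, (h.memL τ q hq).2⟩

-- list index helpers
lemma idx_lt_length {L : List α} {i : ℕ} {a : α} (h : L[i]? = some a) : i < L.length := by
  by_contra hc
  rw [List.getElem?_eq_none (Nat.le_of_not_lt hc)] at h; cases h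

lemma mem_of_getElem? {L : List α} {i : ℕ} {a : α} (h : L[i]? = some a) : a ∈ L :=
  List.mem_of_getElem? h

lemma getElem?_append_of_lt {L M : List α} {i : ℕ} (h : i < L.length) : (L ++ M)[i]? = L[i]? := by
  rw [List.getElem?_append, if_pos h]

lemma getElem?_concat_cases {L : List α} {c : α} {j : ℕ} {z : α}
    (h : (L ++ [c])[j]? = some z) : (j < L.length ∧ L[j]? = some z) ∨ (j = L.length ∧ z = c) := by
  have hj := idx_lt_length h
  rw [List.length_append, List.length_singleton] at hj
  rcases Nat.lt_or_ge j L.length with hlt | hge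
  · left
    exact ⟨hlt, by rw [← getElem?_append_of_lt hlt]; exact h⟩
  · right
    have hje : j = L.length := Nat.le_antisymm (Nat.lt_succ_iff.mp hj) hge
    subst hje
    rw [List.getElem?_append_right (Nat.le_refl _), Nat.sub_self] at h
    simp at h
    exact ⟨rfl, h.symm⟩

/-- Appending a fresh vertex with no pairs preserves `SepOK`. -/
lemma sepOK_app_fresh {P : ι → Set (α × α)} {L : List α} {x : α}
    (hsep : SepOK (⟨P, L⟩ : St ι α)) (hmem : ∀ τ, ∀ q ∈ P τ, q.1 ∈ L ∧ q.2 ∈ L)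
    (hx : x ∉ L) : SepOK (⟨P, L ++ [x]⟩ : St ι α) := by
  constructor
  · exact hsep.1
  · intro i₁ i₂ k a b₁ b₂ m₁ m₂ τ₁ τ₂ hi₁ hi₂ hk hb₁ hb₂ hr₁ hr₂
    dsimp only at hk hb₁ hb₂ hr₁ hr₂
    rcases getElem?_concat_cases hk with ⟨hkl, hk'⟩ | ⟨hkl, rfl⟩
    · rcases getElem?_concat_cases hb₁ with ⟨hi₁l, hb₁'⟩ | ⟨he, rfl⟩
      · rcases getElem?_concat_cases hb₂ with ⟨hi₂l, hb₂'⟩ | ⟨he, rfl⟩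
        · exact hsep.2 i₁ i₂ k a b₁ b₂ m₁ m₂ τ₁ τ₂ hi₁ hi₂ hk' hb₁' hb₂' hr₁ hr₂
        · omega
      · omega
    · -- a = x has no pairs
      exfalso
      cases m₁ with
      | true => exact hx (hmem τ₁ _ hr₁).1
      | false => exact hx (hmem τ₁ _ hr₁).2

/-- Adding one pair whose fresh endpoint `c` is appended last preserves `SepOK`. -/
lemma sepOK_add_pair {P : ι → Set (α × α)} {L : List α} {τs : ι} {c d : α} {q0 : α × α}
    (hsep : SepOK (⟨P, L⟩ : St ι α)) (hmem : ∀ τ, ∀ q ∈ P τ, q.1 ∈ L ∧ q.2 ∈ L)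
    (hcL : c ∉ L) (hdL : d ∈ L) (hq : q0 = (d, c) ∨ q0 = (c, d)) :
    SepOK (⟨fun τ => if τ = τs then insert q0 (P τ) else P τ, L ++ [c]⟩ : St ι α) := by
  have hcd : c ≠ d := fun h => hcL (h ▸ hdL)
  have hq1 : q0.1 ∈ L ∨ q0.1 = c := by
    rcases hq with rfl | rfl
    · exact Or.inl hdL
    · exact Or.inr rfl
  constructor
  · intro τ a ha
    dsimp only at ha
    by_cases hτ : τ = τs
    · rw [if_pos hτ] at ha
      rcases ha with ha | ha
      · rcases hq with rfl | rfl
        · rw [Prod.mk.injEq] at ha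
          exact hcd (ha.2.symm.trans ha.1)
        · rw [Prod.mk.injEq] at ha
          exact hcd (ha.1.symm.trans ha.2)
      · exact hsep.1 τ a ha
    · rw [if_neg hτ] at ha
      exact hsep.1 τ a ha
  · intro i₁ i₂ k a b₁ b₂ m₁ m₂ τ₁ τ₂ hi₁ hi₂ hk hb₁ hb₂ hr₁ hr₂
    dsimp only at hk hb₁ hb₂ hr₁ hr₂
    have hwit : ∀ (m : Bool) (τ : ι) (b : α),
        Rel (fun τ' => if τ' = τs then insert q0 (P τ') else P τ') m τ a b →
        Rel P m τ a b ∨ ((cond m (a, b) (b, a)) = q0 ∧ τ = τs) := by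
      intro m τ b hr
      unfold Rel at hr ⊢
      dsimp only at hr
      by_cases hτ : τ = τs
      · rw [if_pos hτ] at hr
        rcases hr with hr | hr
        · exact Or.inr ⟨hr, hτ⟩
        · exact Or.inl hr
      · rw [if_neg hτ] at hr
        exact Or.inl hr
    rcases getElem?_concat_cases hk with ⟨hkl, hk'⟩ | ⟨hkl, hac⟩
    · -- a ∈ L (old vertex)
      have haL : a ∈ L := mem_of_getElem? hk'
      have haC : a ≠ c := fun h => hcL (h ▸ haL)
      have hgetb : ∀ {i : ℕ} {b : α}, i < k → (L ++ [c])[i]? = some b → b ∈ L ∧ L[i]? = some b := by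
        intro i b hik hb
        rcases getElem?_concat_cases hb with ⟨_, h'⟩ | ⟨he, rfl⟩
        · exact ⟨mem_of_getElem? h', h'⟩
        · omega
      obtain ⟨hb₁L, hb₁'⟩ := hgetb hi₁ hb₁
      obtain ⟨hb₂L, hb₂'⟩ := hgetb hi₂ hb₂
      have hold : ∀ (m : Bool) (τ : ι) (b : α), b ∈ L →
          Rel (fun τ' => if τ' = τs then insert q0 (P τ') else P τ') m τ a b → Rel P m τ a b := by
        intro m τ b hbL hr
        rcases hwit m τ b hr with h | ⟨hnew, _⟩
        · exact h
        · exfalso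
          have hbC : b ≠ c := fun h => hcL (h ▸ hbL)
          cases m with
          | true =>
            rw [Bool.cond_true] at hnew
            rcases hq with rfl | rfl
            · rw [Prod.mk.injEq] at hnew; exact hbC hnew.2
            · rw [Prod.mk.injEq] at hnew; exact haC hnew.1
          | false =>
            rw [Bool.cond_false] at hnew
            rcases hq with rfl | rfl
            · rw [Prod.mk.injEq] at hnew; exact haC hnew.2
            · rw [Prod.mk.injEq] at hnew; exact hbC hnew.1
      exact hsep.2 i₁ i₂ k a b₁ b₂ m₁ m₂ τ₁ τ₂ hi₁ hi₂ hk' hb₁' hb₂'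
        (hold m₁ τ₁ b₁ hb₁L hr₁) (hold m₂ τ₂ b₂ hb₂L hr₂)
    · -- a = c is the new vertex: only witness is the new pair towards d
      subst hac
      rcases hq with hq | hq
      · -- q0 = (d, a)
        have honly : ∀ (m : Bool) (τ : ι) (b : α),
            Rel (fun τ' => if τ' = τs then insert q0 (P τ') else P τ') m τ a b →
            b = d ∧ m = false ∧ τ = τs := by
          intro m τ b hr
          rcases hwit m τ b hr with h | ⟨hnew, hττ⟩
          · exfalso
            cases m with
            | true => exact hcL (hmem τ _ h).1
            | false => exact hcL (hmem τ _ h).2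
          · cases m with
            | true =>
              rw [Bool.cond_true, hq, Prod.mk.injEq] at hnew
              exact absurd hnew.1 hcd
            | false =>
              rw [Bool.cond_false, hq, Prod.mk.injEq] at hnew
              exact ⟨hnew.1, rfl, hττ⟩
        obtain ⟨e1, e2, e3⟩ := honly m₁ τ₁ b₁ hr₁
        obtain ⟨e1', e2', e3'⟩ := honly m₂ τ₂ b₂ hr₂
        exact ⟨e1.trans e1'.symm, e2.trans e2'.symm, e3.trans e3'.symm⟩
      · -- q0 = (a, d)
        have honly : ∀ (m : Bool) (τ : ι) (b : α),
            Rel (fun τ' => if τ' = τs then insert q0 (P τ') else P τ') m τ a b →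
            b = d ∧ m = true ∧ τ = τs := by
          intro m τ b hr
          rcases hwit m τ b hr with h | ⟨hnew, hττ⟩
          · exfalso
            cases m with
            | true => exact hcL (hmem τ _ h).1
            | false => exact hcL (hmem τ _ h).2
          · cases m with
            | true =>
              rw [Bool.cond_true, hq, Prod.mk.injEq] at hnew
              exact ⟨hnew.2, rfl, hττ⟩
            | false =>
              rw [Bool.cond_false, hq, Prod.mk.injEq] at hnew
              exact absurd hnew.2 hcd
        obtain ⟨e1, e2, e3⟩ := honly m₁ τ₁ b₁ hr₁
        obtain ⟨e1', e2', e3'⟩ := honly m₂ τ₂ b₂ hr₂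
        exact ⟨e1.trans e1'.symm, e2.trans e2'.symm, e3.trans e3'.symm⟩

end AFE
namespace AFE
variable {α : Type}

lemma exists_getElem?_of_mem {L : List α} {x : α} (h : x ∈ L) : ∃ i : ℕ, L[i]? = some x := by
  obtain ⟨⟨i, hi⟩, hg⟩ := List.get_of_mem h
  refine ⟨i, ?_⟩
  rw [List.getElem?_eq_getElem hi]
  simp only [Option.some_inj]
  simpa [List.get_eq_getElem] using hg

end AFE
namespace AFE

open Classical

variable {α ι : Type} [PartialOrder α]

variable {T : OmegaOneTree α} {lo δ : Ordinal} {X : Set α} {f f' : ι → α → α} {A : Set ι} {Hs : Prop}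

lemma stepF (hloδ : lo < δ) (hδ : δ < omega1) (hf : ∀ τ, IsTreeAuto T lo (f τ) (f' τ))
    {st : St ι α} (h : Inv T lo δ X f A Hs st) (τs : ι) (xs : α) (hxs : T.height xs = δ) :
    ∃ st', Inv T lo δ X f A Hs st' ∧ Extends st st' ∧ ∃ y, (xs, y) ∈ st'.P τs := by
  by_cases hdom : ∃ y, (xs, y) ∈ st.P τs
  · exact ⟨st, h, Extends.rfl, hdom⟩
  have hxdom : ∀ q ∈ st.P τs, q.1 ≠ xs := by
    intro q hq he
    have hq' : (q.1, q.2) ∈ st.P τs := by simpa using hq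
    exact hdom ⟨q.2, he ▸ hq'⟩
  -- extend the list with xs if necessary
  obtain ⟨L₁, hpre₁, hxsL₁, hnd₁, hlev₁, hsep₁⟩ :
      ∃ L₁ : List α, st.L <+: L₁ ∧ xs ∈ L₁ ∧ L₁.Nodup ∧ (∀ z ∈ L₁, T.height z = δ) ∧
        (Hs → SepOK (⟨st.P, L₁⟩ : St ι α)) := by
    by_cases hmem : xs ∈ st.L
    · exact ⟨st.L, List.prefix_rfl, hmem, h.nodup, h.lev, fun hs => h.sep hs⟩
    · refine ⟨st.L ++ [xs], st.L.prefix_append [xs], by simp, ?_, ?_, ?_⟩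
      · simp [List.nodup_append, h.nodup, hmem]; exact fun a ha hax => hmem (hax ▸ ha)
      · intro z hz
        rcases List.mem_append.mp hz with hz | hz
        · exact h.lev z hz
        · rw [List.mem_singleton.mp hz]; exact hxs
      · intro hs
        exact sepOK_app_fresh (h.sep hs) h.memL hmem
  have hsub₁ : ∀ z ∈ st.L, z ∈ L₁ := fun z hz => hpre₁.subset hz
  have hmem₁ : ∀ τ, ∀ q ∈ st.P τ, q.1 ∈ L₁ ∧ q.2 ∈ L₁ := by
    intro τ q hq
    exact ⟨hsub₁ _ (h.memL τ q hq).1, hsub₁ _ (h.memL τ q hq).2⟩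
  obtain ⟨ys, hysh, hysF, hysbd, hysag⟩ :=
    key T hloδ hδ (hf τs) (st.P τs) (h.Pfin τs) (h.hts1 τs) (h.hts2 τs) (h.bd τs)
      (h.ag τs) hxs hxdom {z | z ∈ L₁} L₁.finite_toSet hxsL₁
      (fun q hq => hsub₁ _ (h.memL τs q hq).2)
  have hysL₁ : ys ∉ L₁ := hysF
  have hysX : ys ∉ X := fun hc => hysL₁ (hsub₁ _ (h.XL _ hc))
  set P' : ι → Set (α × α) := fun τ => if τ = τs then insert (xs, ys) (st.P τ) else st.P τ with hP'def
  have hP' : ∀ τ, ∀ q ∈ P' τ, q ∈ st.P τ ∨ (q = (xs, ys) ∧ τ = τs) := by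
    intro τ q hq
    by_cases hτ : τ = τs
    · rw [hP'def] at hq; simp only [if_pos hτ] at hq
      rcases hq with hq | hq
      · exact Or.inr ⟨hq, hτ⟩
      · exact Or.inl hq
    · rw [hP'def] at hq; simp only [if_neg hτ] at hq
      exact Or.inl hq
  have hP'sub : ∀ τ, st.P τ ⊆ P' τ := by
    intro τ q hq
    rw [hP'def]
    by_cases hτ : τ = τs
    · simp only [if_pos hτ]; exact Set.mem_insert_iff.mpr (Or.inr hq)
    · simp only [if_neg hτ]; exact hq
  refine ⟨⟨P', L₁ ++ [ys]⟩, ?_, ⟨hP'sub, hpre₁.trans (L₁.prefix_append [ys])⟩,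
    ⟨ys, by simp only [hP'def, if_pos rfl]; exact Set.mem_insert _ _⟩⟩
  constructor
  · intro τ q hq
    rcases hP' τ q hq with hq | ⟨rfl, _⟩
    · exact h.hts1 τ q hq
    · exact hxs
  · intro τ q hq
    rcases hP' τ q hq with hq | ⟨rfl, _⟩
    · exact h.hts2 τ q hq
    · exact hysh
  · intro τ q hq
    rcases hP' τ q hq with hq | ⟨rfl, rfl⟩
    · exact h.bd τ q hq
    · exact hysbd.symm
  · intro τ q hq q' hq' β hβ
    rcases hP' τ q hq with hq2 | ⟨rfl, rfl⟩
    · rcases hP' τ q' hq' with hq2' | ⟨rfl, rfl⟩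
      · exact h.ag τ q hq2 q' hq2' β hβ
      · constructor
        · intro he
          exact ((hysag q hq2 β hβ).mp he.symm).symm
        · intro he
          exact ((hysag q hq2 β hβ).mpr he.symm).symm
    · rcases hP' τ q' hq' with hq2' | ⟨rfl, -⟩
      · exact hysag q' hq2' β hβ
      · exact iff_of_true rfl rfl
  · intro τ q hq
    rcases hP' τ q hq with hq | ⟨rfl, _⟩
    · exact ⟨List.mem_append_left _ (hmem₁ τ q hq).1, List.mem_append_left _ (hmem₁ τ q hq).2⟩
    · exact ⟨List.mem_append_left _ hxsL₁, List.mem_append_right _ (by simp)⟩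
  · intro z hz
    rcases List.mem_append.mp hz with hz | hz
    · exact hlev₁ z hz
    · rw [List.mem_singleton.mp hz]; exact hysh
  · simp [List.nodup_append, hnd₁, hysL₁]; exact fun a ha hax => hysL₁ (hax ▸ ha)
  · intro x hx
    exact List.mem_append_left _ (hsub₁ _ (h.XL x hx))
  · intro τ hτ x hx y hy hfxy
    exact hP'sub τ (h.forced1 τ hτ x hx y hy hfxy)
  · intro τ hτ x hx y hy hxy
    rcases hP' τ _ hxy with hxy | ⟨he, _⟩
    · exact h.forced2 τ hτ x hx y hy hxy
    · exfalso
      have : y = ys := congrArg Prod.snd he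
      exact hysX (this ▸ hy)
  · intro hs
    exact sepOK_add_pair (hsep₁ hs) hmem₁ hysL₁ hxsL₁ (Or.inl rfl)

lemma stepB (hloδ : lo < δ) (hδ : δ < omega1) (hf : ∀ τ, IsTreeAuto T lo (f τ) (f' τ))
    {st : St ι α} (h : Inv T lo δ X f A Hs st) (τs : ι) (ys : α) (hys : T.height ys = δ) :
    ∃ st', Inv T lo δ X f A Hs st' ∧ Extends st st' ∧ ∃ x, (x, ys) ∈ st'.P τs := by
  by_cases hran : ∃ x, (x, ys) ∈ st.P τs
  · exact ⟨st, h, Extends.rfl, hran⟩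
  have hydom : ∀ q ∈ st.P τs, q.2 ≠ ys := by
    intro q hq he
    have hq' : (q.1, q.2) ∈ st.P τs := by simpa using hq
    exact hran ⟨q.1, he ▸ hq'⟩
  obtain ⟨L₁, hpre₁, hysL₁, hnd₁, hlev₁, hsep₁⟩ :
      ∃ L₁ : List α, st.L <+: L₁ ∧ ys ∈ L₁ ∧ L₁.Nodup ∧ (∀ z ∈ L₁, T.height z = δ) ∧
        (Hs → SepOK (⟨st.P, L₁⟩ : St ι α)) := by
    by_cases hmem : ys ∈ st.L
    · exact ⟨st.L, List.prefix_rfl, hmem, h.nodup, h.lev, fun hs => h.sep hs⟩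
    · refine ⟨st.L ++ [ys], st.L.prefix_append [ys], by simp, ?_, ?_, ?_⟩
      · simp [List.nodup_append, h.nodup, hmem]; exact fun a ha hax => hmem (hax ▸ ha)
      · intro z hz
        rcases List.mem_append.mp hz with hz | hz
        · exact h.lev z hz
        · rw [List.mem_singleton.mp hz]; exact hys
      · intro hs
        exact sepOK_app_fresh (h.sep hs) h.memL hmem
  have hsub₁ : ∀ z ∈ st.L, z ∈ L₁ := fun z hz => hpre₁.subset hz
  have hmem₁ : ∀ τ, ∀ q ∈ st.P τ, q.1 ∈ L₁ ∧ q.2 ∈ L₁ := by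
    intro τ q hq
    exact ⟨hsub₁ _ (h.memL τ q hq).1, hsub₁ _ (h.memL τ q hq).2⟩
  -- the inverse partial map
  set pinv : Set (α × α) := Prod.swap ⁻¹' (st.P τs) with hpinvdef
  have hpinvmem : ∀ q : α × α, q ∈ pinv ↔ (q.2, q.1) ∈ st.P τs := fun q => Iff.rfl
  have hpfin : pinv.Finite := (h.Pfin τs).preimage Prod.swap_injective.injOn
  have hrlo : ∀ q ∈ st.P τs, T.height (T.restrict q.2 lo) = lo := by
    intro q hq
    exact T.height_restrict _ ((h.hts2 τs q hq) ▸ le_of_lt hloδ)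
  have hrlo1 : ∀ q ∈ st.P τs, T.height (T.restrict q.1 lo) = lo := by
    intro q hq
    exact T.height_restrict _ ((h.hts1 τs q hq) ▸ le_of_lt hloδ)
  obtain ⟨xs, hxsh, hxsF, hxsbd, hxsag⟩ :=
    key T hloδ hδ (aut_symm T (hf τs)) pinv hpfin
      (fun q hq => h.hts2 τs _ hq)
      (fun q hq => h.hts1 τs _ hq)
      (by
        intro q hq
        have hb := h.bd τs _ hq
        have : f' τs (f τs (T.restrict q.2 lo)) = T.restrict q.2 lo :=
          (hf τs).2.2.1 _ (le_of_eq (hrlo1 _ hq))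
        have hb' : f τs (T.restrict q.2 lo) = T.restrict q.1 lo := hb
        rw [← hb']
        exact this)
      (by
        intro q hq q' hq' β hβ
        exact (h.ag τs _ hq _ hq' β hβ).symm)
      hys (fun q hq => hydom _ hq) {z | z ∈ L₁} L₁.finite_toSet hysL₁
      (fun q hq => hsub₁ _ (h.memL τs _ hq).1)
  have hxsL₁ : xs ∉ L₁ := hxsF
  have hxsX : xs ∉ X := fun hc => hxsL₁ (hsub₁ _ (h.XL _ hc))
  have hxsys : xs ≠ ys := fun he => hxsL₁ (he ▸ hysL₁)
  set P' : ι → Set (α × α) := fun τ => if τ = τs then insert (xs, ys) (st.P τ) else st.P τ with hP'def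
  have hP' : ∀ τ, ∀ q ∈ P' τ, q ∈ st.P τ ∨ (q = (xs, ys) ∧ τ = τs) := by
    intro τ q hq
    by_cases hτ : τ = τs
    · rw [hP'def] at hq; simp only [if_pos hτ] at hq
      rcases hq with hq | hq
      · exact Or.inr ⟨hq, hτ⟩
      · exact Or.inl hq
    · rw [hP'def] at hq; simp only [if_neg hτ] at hq
      exact Or.inl hq
  have hP'sub : ∀ τ, st.P τ ⊆ P' τ := by
    intro τ q hq
    rw [hP'def]
    by_cases hτ : τ = τs
    · simp only [if_pos hτ]; exact Set.mem_insert_iff.mpr (Or.inr hq)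
    · simp only [if_neg hτ]; exact hq
  have hagnew : ∀ q ∈ st.P τs, ∀ β ≤ δ,
      (T.restrict xs β = T.restrict q.1 β ↔ T.restrict ys β = T.restrict q.2 β) := by
    intro q hq β hβ
    have hqs : q.swap ∈ pinv := by
      rw [hpinvdef]
      simpa using hq
    exact (hxsag q.swap hqs β hβ).symm
  refine ⟨⟨P', L₁ ++ [xs]⟩, ?_, ⟨hP'sub, hpre₁.trans (L₁.prefix_append [xs])⟩,
    ⟨xs, by simp only [hP'def, if_pos rfl]; exact Set.mem_insert _ _⟩⟩
  constructor
  · intro τ q hq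
    rcases hP' τ q hq with hq | ⟨rfl, _⟩
    · exact h.hts1 τ q hq
    · exact hxsh
  · intro τ q hq
    rcases hP' τ q hq with hq | ⟨rfl, _⟩
    · exact h.hts2 τ q hq
    · exact hys
  · intro τ q hq
    rcases hP' τ q hq with hq | ⟨rfl, rfl⟩
    · exact h.bd τ q hq
    · change f _ (T.restrict xs lo) = T.restrict ys lo
      rw [hxsbd]
      exact (hf _).2.2.2.1 _ (le_of_eq (T.height_restrict _ (hys ▸ le_of_lt hloδ)))
  · intro τ q hq q' hq' β hβ
    rcases hP' τ q hq with hq2 | ⟨rfl, rfl⟩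
    · rcases hP' τ q' hq' with hq2' | ⟨rfl, rfl⟩
      · exact h.ag τ q hq2 q' hq2' β hβ
      · constructor
        · intro he
          exact ((hagnew q hq2 β hβ).mp he.symm).symm
        · intro he
          exact ((hagnew q hq2 β hβ).mpr he.symm).symm
    · rcases hP' τ q' hq' with hq2' | ⟨rfl, -⟩
      · exact hagnew q' hq2' β hβ
      · exact iff_of_true rfl rfl
  · intro τ q hq
    rcases hP' τ q hq with hq | ⟨rfl, _⟩
    · exact ⟨List.mem_append_left _ (hmem₁ τ q hq).1, List.mem_append_left _ (hmem₁ τ q hq).2⟩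
    · exact ⟨List.mem_append_right _ (by simp), List.mem_append_left _ hysL₁⟩
  · intro z hz
    rcases List.mem_append.mp hz with hz | hz
    · exact hlev₁ z hz
    · rw [List.mem_singleton.mp hz]; exact hxsh
  · simp [List.nodup_append, hnd₁, hxsL₁]; exact fun a ha hax => hxsL₁ (hax ▸ ha)
  · intro x hx
    exact List.mem_append_left _ (hsub₁ _ (h.XL x hx))
  · intro τ hτ x hx y hy hfxy
    exact hP'sub τ (h.forced1 τ hτ x hx y hy hfxy)
  · intro τ hτ x hx y hy hxy
    rcases hP' τ _ hxy with hxy | ⟨he, _⟩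
    · exact h.forced2 τ hτ x hx y hy hxy
    · exfalso
      have : x = xs := congrArg Prod.fst he
      exact hxsX (this ▸ hx)
  · intro hs
    exact sepOK_add_pair (hsep₁ hs) hmem₁ hxsL₁ hysL₁ (Or.inr rfl)

end AFE
namespace AFE

open Classical

variable {α ι : Type} [PartialOrder α]

variable {T : OmegaOneTree α} {lo δ : Ordinal} {X : Set α} {f f' : ι → α → α} {A : Set ι}

/-- The forced pairs on `X`. -/
def P0 (T : OmegaOneTree α) (lo : Ordinal) (X : Set α) (f : ι → α → α) (A : Set ι) :
    ι → Set (α × α) :=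
  fun τ => {q | τ ∈ A ∧ q.1 ∈ X ∧ q.2 ∈ X ∧ f τ (T.restrict q.1 lo) = T.restrict q.2 lo}

lemma base (hloδ : lo < δ) (hf : ∀ τ, IsTreeAuto T lo (f τ) (f' τ))
    (hXfin : X.Finite) (hXlev : ∀ x ∈ X, T.height x = δ)
    (hXdrop : Set.InjOn (fun x => T.restrict x lo) X) :
    ∃ st₀ : St ι α,
      Inv T lo δ X f A
        (AutoSepSet (fun τ : ↥A => f τ.1) (fun τ : ↥A => f' τ.1)
          ((fun x => T.restrict x lo) '' X)) st₀ ∧ st₀.P = P0 T lo X f A := by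
  set Hs := AutoSepSet (fun τ : ↥A => f τ.1) (fun τ : ↥A => f' τ.1)
    ((fun x => T.restrict x lo) '' X) with hHs
  have hloδ' : lo ≤ δ := le_of_lt hloδ
  have hrlo : ∀ x ∈ X, T.height (T.restrict x lo) = lo := by
    intro x hx
    exact T.height_restrict _ ((hXlev x hx) ▸ hloδ')
  -- the Ag property for forced pairs
  have hag : ∀ τ, ∀ q ∈ P0 T lo X f A τ, ∀ q' ∈ P0 T lo X f A τ, ∀ β ≤ δ,
      (T.restrict q.1 β = T.restrict q'.1 β ↔ T.restrict q.2 β = T.restrict q'.2 β) := by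
    rintro τ ⟨x, y⟩ ⟨hτ, hx, hy, hb⟩ ⟨x', y'⟩ ⟨-, hx', hy', hb'⟩ β hβ
    dsimp only at *
    by_cases hxx : x = x'
    · subst hxx
      have hyy : y = y' := hXdrop hy hy' (by dsimp only; rw [← hb, ← hb'])
      subst hyy
      exact iff_of_true rfl rfl
    · have hrne : T.restrict x lo ≠ T.restrict x' lo := fun hc => hxx (hXdrop hx hx' hc)
      have hrne' : T.restrict y lo ≠ T.restrict y' lo := by
        rw [← hb, ← hb']
        intro hc
        exact hrne (aut_inj T (hf τ) (le_of_eq (hrlo x hx)) (le_of_eq (hrlo x' hx')) hc)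
      rcases le_or_gt β lo with hβlo | hβlo
      · have e1 : T.restrict x β = T.restrict (T.restrict x lo) β :=
          restrict_restrict' T hβlo ((hXlev x hx) ▸ hloδ')
        have e2 : T.restrict x' β = T.restrict (T.restrict x' lo) β :=
          restrict_restrict' T hβlo ((hXlev x' hx') ▸ hloδ')
        have e3 : T.restrict y β = T.restrict (f τ (T.restrict x lo)) β := by
          rw [restrict_restrict' T hβlo ((hXlev y hy) ▸ hloδ'), hb]
        have e4 : T.restrict y' β = T.restrict (f τ (T.restrict x' lo)) β := by
          rw [restrict_restrict' T hβlo ((hXlev y' hy') ▸ hloδ'), hb']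
        rw [e1, e2, e3, e4]
        exact aut_Ag T (hf τ) (hrlo x hx) (hrlo x' hx') hβlo
      · constructor
        · intro hc
          exact absurd (Ag_mono T (hXlev x hx) (hXlev x' hx') (le_of_lt hβlo) hβ hc) hrne
        · intro hc
          exact absurd (Ag_mono T (hXlev y hy) (hXlev y' hy') (le_of_lt hβlo) hβ hc) hrne'
  -- obtain the initial listing of X
  obtain ⟨n, a, hainj, haX, hXa, hsep⟩ :
      ∃ (n : ℕ) (a : Fin n → α), Function.Injective a ∧ (∀ j, a j ∈ X) ∧
        (∀ x ∈ X, ∃ j, a j = x) ∧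
        (Hs → SepOK (⟨P0 T lo X f A, List.ofFn a⟩ : St ι α)) := by
    by_cases hs : Hs
    · rw [hHs] at hs
      obtain ⟨n, b, hbinj, hbrange, hbsep⟩ := hs
      have hchoice : ∀ k : Fin n, ∃ x, x ∈ X ∧ T.restrict x lo = b k := by
        intro k
        have : b k ∈ (fun x => T.restrict x lo) '' X := hbrange ▸ Set.mem_range_self k
        obtain ⟨x, hx, hxe⟩ := this
        exact ⟨x, hx, hxe⟩
      choose a haX hab using hchoice
      have hbht : ∀ k : Fin n, T.height (b k) = lo := by
        intro k
        rw [← hab k]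
        exact hrlo _ (haX k)
      have hainj : Function.Injective a := by
        intro j j' he
        exact hbinj (by rw [← hab j, ← hab j', he])
      have hgetofFn : ∀ {j : ℕ} {z : α}, (List.ofFn a)[j]? = some z → ∃ hj : j < n, z = a ⟨j, hj⟩ := by
        intro j z hz
        have hj := idx_lt_length hz
        rw [List.length_ofFn] at hj
        refine ⟨hj, ?_⟩
        rw [List.getElem?_eq_getElem (by rwa [List.length_ofFn]), List.getElem_ofFn] at hz
        exact (Option.some_inj.mp hz).symm
      refine ⟨n, a, hainj, haX, ?_, ?_⟩
      · intro x hx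
        have : T.restrict x lo ∈ (fun x => T.restrict x lo) '' X := ⟨x, hx, rfl⟩
        rw [← hbrange] at this
        obtain ⟨k, hk⟩ := this
        exact ⟨k, hXdrop (haX k) hx (by dsimp only; rw [hab k, hk])⟩
      · intro _
        constructor
        · rintro τ z ⟨hτ, hz, -, hfz⟩
          have : T.restrict z lo ∈ (fun x => T.restrict x lo) '' X := ⟨z, hz, rfl⟩
          rw [← hbrange] at this
          obtain ⟨k, hk⟩ := this
          refine hbsep.1 k ⟨τ, hτ⟩ ?_
          show f τ (b k) = b k
          rw [hk]
          exact hfz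
        · intro i₁ i₂ k z b₁ b₂ m₁ m₂ τ₁ τ₂ hi₁ hi₂ hk hb₁ hb₂ hr₁ hr₂
          obtain ⟨hkn, rfl⟩ := hgetofFn hk
          obtain ⟨hi₁n, rfl⟩ := hgetofFn hb₁
          obtain ⟨hi₂n, rfl⟩ := hgetofFn hb₂
          -- translate witnesses
          have htrans : ∀ (m : Bool) (τ : ι) (i : ℕ) (hi : i < n),
              Rel (P0 T lo X f A) m τ (a ⟨k, hkn⟩) (a ⟨i, hi⟩) →
              ∃ hτ : τ ∈ A, cond m (f τ (b ⟨k, hkn⟩)) (f' τ (b ⟨k, hkn⟩)) = b ⟨i, hi⟩ := by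
            intro m τ i hi hr
            cases m with
            | true =>
              obtain ⟨hτ, -, -, hfr⟩ := hr
              refine ⟨hτ, ?_⟩
              show f τ (b ⟨k, hkn⟩) = b ⟨i, hi⟩
              rw [← hab ⟨k, hkn⟩, ← hab ⟨i, hi⟩]
              exact hfr
            | false =>
              obtain ⟨hτ, -, -, hfr⟩ := hr
              refine ⟨hτ, ?_⟩
              show f' τ (b ⟨k, hkn⟩) = b ⟨i, hi⟩
              have : f τ (b ⟨i, hi⟩) = b ⟨k, hkn⟩ := by
                rw [← hab ⟨k, hkn⟩, ← hab ⟨i, hi⟩]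
                exact hfr
              rw [← this]
              exact (hf τ).2.2.1 _ (le_of_eq (hbht ⟨i, hi⟩))
          obtain ⟨hτ₁, hw₁⟩ := htrans m₁ τ₁ i₁ hi₁n hr₁
          obtain ⟨hτ₂, hw₂⟩ := htrans m₂ τ₂ i₂ hi₂n hr₂
          have := hbsep.2 ⟨k, hkn⟩ ⟨i₁, hi₁n⟩ ⟨i₂, hi₂n⟩ m₁ m₂ ⟨τ₁, hτ₁⟩ ⟨τ₂, hτ₂⟩
            (by exact hi₁) (by exact hi₂) hw₁ hw₂
          refine ⟨?_, this.2.1, ?_⟩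
          · rw [this.1]
          · exact congrArg Subtype.val this.2.2
    · obtain ⟨n, e, hrange⟩ := hXfin.fin_embedding
      refine ⟨n, e, e.injective, ?_, ?_, fun hc => absurd hc hs⟩
      · intro j
        rw [← hrange]
        exact Set.mem_range_self j
      · intro x hx
        rw [← hrange] at hx
        exact hx
  -- assemble the invariant
  refine ⟨⟨P0 T lo X f A, List.ofFn a⟩, ?_, rfl⟩
  have hmemX : ∀ z ∈ X, z ∈ List.ofFn a := by
    intro z hz
    obtain ⟨j, hj⟩ := hXa z hz
    rw [List.mem_ofFn]
    exact ⟨j, hj⟩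
  constructor
  · rintro τ q ⟨-, h1, -, -⟩
    exact hXlev _ h1
  · rintro τ q ⟨-, -, h2, -⟩
    exact hXlev _ h2
  · rintro τ q ⟨-, -, -, h3⟩
    exact h3
  · exact hag
  · rintro τ q ⟨-, h1, h2, -⟩
    exact ⟨hmemX _ h1, hmemX _ h2⟩
  · intro z hz
    rw [List.mem_ofFn] at hz
    obtain ⟨j, rfl⟩ := hz
    exact hXlev _ (haX j)
  · exact List.nodup_ofFn.mpr hainj
  · exact hmemX
  · intro τ hτ x hx y hy hfxy
    exact ⟨hτ, hx, hy, hfxy⟩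
  · rintro τ hτ x hx y hy ⟨-, -, -, hfr⟩
    exact hfr
  · exact hsep

end AFE
namespace AFE

open Classical

variable {α ι : Type} [PartialOrder α]

/-- A node of level `δ` above `z`. -/
noncomputable def upF (T : OmegaOneTree α) (δ : Ordinal) (hδ : δ < omega1) : α → α :=
  fun z => if h : T.height z < δ then (T.exists_above z h hδ).choose else z

lemma upF_le {T : OmegaOneTree α} {δ : Ordinal} (hδ : δ < omega1) {z : α}
    (hz : T.height z ≤ δ) : z ≤ upF T δ hδ z ∧ T.height (upF T δ hδ z) = δ := by
  unfold upF
  by_cases h : T.height z < δ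
  · rw [dif_pos h]
    exact ⟨le_of_lt (T.exists_above z h hδ).choose_spec.1, (T.exists_above z h hδ).choose_spec.2⟩
  · rw [dif_neg h]
    exact ⟨le_rfl, le_antisymm hz (not_lt.mp h)⟩

lemma upF_self {T : OmegaOneTree α} {δ : Ordinal} (hδ : δ < omega1) {z : α}
    (hz : T.height z = δ) : upF T δ hδ z = z := by
  unfold upF
  rw [dif_neg (by rw [hz]; exact lt_irrefl δ)]

/-- The forward limit map. -/
noncomputable def sigF (U : ι → Set (α × α)) : ι → α → α :=
  fun τ s => if h : ∃ y, (s, y) ∈ U τ then h.choose else s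

/-- The backward limit map. -/
noncomputable def sigF' (U : ι → Set (α × α)) : ι → α → α :=
  fun τ s => if h : ∃ x, (x, s) ∈ U τ then h.choose else s

lemma sigF_mem {U : ι → Set (α × α)} {τ : ι} {s : α} (h : ∃ y, (s, y) ∈ U τ) :
    (s, sigF U τ s) ∈ U τ := by
  unfold sigF
  rw [dif_pos h]
  exact h.choose_spec

lemma sigF'_mem {U : ι → Set (α × α)} {τ : ι} {s : α} (h : ∃ x, (x, s) ∈ U τ) :
    (sigF' U τ s, s) ∈ U τ := by
  unfold sigF'
  rw [dif_pos h]
  exact h.choose_spec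

/-- The final automorphism. -/
noncomputable def gF (T : OmegaOneTree α) (δ : Ordinal) (hδ : δ < omega1)
    (U : ι → Set (α × α)) : ι → α → α :=
  fun τ z => if T.height z ≤ δ then T.restrict (sigF U τ (upF T δ hδ z)) (T.height z) else z

/-- The final inverse automorphism. -/
noncomputable def gF' (T : OmegaOneTree α) (δ : Ordinal) (hδ : δ < omega1)
    (U : ι → Set (α × α)) : ι → α → α :=
  fun τ z => if T.height z ≤ δ then T.restrict (sigF' U τ (upF T δ hδ z)) (T.height z) else z

end AFE
namespace AFE

open Classical

variable {α ι : Type} [PartialOrder α]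

lemma assemble {T : OmegaOneTree α} {lo δ : Ordinal} {X : Set α} {f f' : ι → α → α} {A : Set ι}
    (hloδ : lo < δ) (hδ : δ < omega1) (hf : ∀ τ, IsTreeAuto T lo (f τ) (f' τ))
    (U : ι → Set (α × α))
    (hU1 : ∀ τ, ∀ q ∈ U τ, T.height q.1 = δ)
    (hU2 : ∀ τ, ∀ q ∈ U τ, T.height q.2 = δ)
    (hUbd : ∀ τ, ∀ q ∈ U τ, f τ (T.restrict q.1 lo) = T.restrict q.2 lo)
    (hUag : ∀ τ, ∀ q ∈ U τ, ∀ q' ∈ U τ, ∀ β ≤ δ,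
      (T.restrict q.1 β = T.restrict q'.1 β ↔ T.restrict q.2 β = T.restrict q'.2 β))
    (htot : ∀ τ s, T.height s = δ → ∃ y, (s, y) ∈ U τ)
    (hcotot : ∀ τ s, T.height s = δ → ∃ x, (x, s) ∈ U τ)
    (hforced : ∀ τ ∈ A, ∀ x ∈ X, ∀ y ∈ X,
      (f τ (T.restrict x lo) = T.restrict y lo ↔ (x, y) ∈ U τ))
    (hXlev : ∀ x ∈ X, T.height x = δ)
    {Hs : Prop}
    (hsepU : Hs → (∀ (τ : ι) (z : α), (z, z) ∉ U τ) ∧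
      ∀ Y : Set α, Y.Finite → (∀ z ∈ Y, T.height z = δ) →
        ∃ (n : ℕ) (a : Fin n → α), Function.Injective a ∧ Set.range a = Y ∧
          ∀ (k i₁ i₂ : Fin n) (m₁ m₂ : Bool) (τ₁ τ₂ : ι), i₁ < k → i₂ < k →
            (cond m₁ ((a k, a i₁) ∈ U τ₁) ((a i₁, a k) ∈ U τ₁)) →
            (cond m₂ ((a k, a i₂) ∈ U τ₂) ((a i₂, a k) ∈ U τ₂)) →
            i₁ = i₂ ∧ m₁ = m₂ ∧ τ₁ = τ₂) :
    (∀ τ, IsTreeAuto T δ (gF T δ hδ U τ) (gF' T δ hδ U τ)) ∧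
    (∀ τ, AutoExtends T lo (f τ) (f' τ) (gF T δ hδ U τ) (gF' T δ hδ U τ)) ∧
    (∀ τ ∈ A, AutoConsistentSet T (gF T δ hδ U τ) lo X) ∧
    (Hs → AutoSeparated T δ (gF T δ hδ U) (gF' T δ hδ U)) := by
  have hloδ' : lo ≤ δ := le_of_lt hloδ
  have hsig : ∀ τ s, T.height s = δ → (s, sigF U τ s) ∈ U τ :=
    fun τ s hs => sigF_mem (htot τ s hs)
  have hsig' : ∀ τ s, T.height s = δ → (sigF' U τ s, s) ∈ U τ :=
    fun τ s hs => sigF'_mem (hcotot τ s hs)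
  have hsigh : ∀ τ s, T.height s = δ → T.height (sigF U τ s) = δ :=
    fun τ s hs => hU2 τ _ (hsig τ s hs)
  have hsig'h : ∀ τ s, T.height s = δ → T.height (sigF' U τ s) = δ :=
    fun τ s hs => hU1 τ _ (hsig' τ s hs)
  have hUfun : ∀ τ x y y', (x, y) ∈ U τ → (x, y') ∈ U τ → y = y' := by
    intro τ x y y' h1 h2
    have := (hUag τ (x, y) h1 (x, y') h2 δ le_rfl).mp rfl
    rwa [restrict_self T (hU2 τ _ h1), restrict_self T (hU2 τ _ h2)] at this
  have hUco : ∀ τ x x' y, (x, y) ∈ U τ → (x', y) ∈ U τ → x = x' := by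
    intro τ x x' y h1 h2
    have := (hUag τ (x, y) h1 (x', y) h2 δ le_rfl).mpr rfl
    rwa [restrict_self T (hU1 τ _ h1), restrict_self T (hU1 τ _ h2)] at this
  have hsig'sig : ∀ τ s, T.height s = δ → sigF' U τ (sigF U τ s) = s := by
    intro τ s hs
    exact hUco τ _ s (sigF U τ s) (hsig' τ _ (hsigh τ s hs)) (hsig τ s hs)
  have hsigsig' : ∀ τ s, T.height s = δ → sigF U τ (sigF' U τ s) = s := by
    intro τ s hs
    exact hUfun τ (sigF' U τ s) _ s (hsig τ _ (hsig'h τ s hs)) (hsig' τ s hs)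
  have hsigag : ∀ τ s t, T.height s = δ → T.height t = δ → ∀ β ≤ δ,
      (T.restrict s β = T.restrict t β ↔ T.restrict (sigF U τ s) β = T.restrict (sigF U τ t) β) :=
    fun τ s t hs ht β hβ => hUag τ (s, sigF U τ s) (hsig τ s hs) (t, sigF U τ t) (hsig τ t ht) β hβ
  have hsig'ag : ∀ τ s t, T.height s = δ → T.height t = δ → ∀ β ≤ δ,
      (T.restrict (sigF' U τ s) β = T.restrict (sigF' U τ t) β ↔ T.restrict s β = T.restrict t β) :=
    fun τ s t hs ht β hβ => hUag τ (sigF' U τ s, s) (hsig' τ s hs) (sigF' U τ t, t) (hsig' τ t ht) β hβ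
  have geval : ∀ τ z, T.height z ≤ δ →
      gF T δ hδ U τ z = T.restrict (sigF U τ (upF T δ hδ z)) (T.height z) := by
    intro τ z h
    unfold gF
    rw [if_pos h]
  have geval' : ∀ τ z, T.height z ≤ δ →
      gF' T δ hδ U τ z = T.restrict (sigF' U τ (upF T δ hδ z)) (T.height z) := by
    intro τ z h
    unfold gF'
    rw [if_pos h]
  have gheight : ∀ τ z, T.height z ≤ δ → T.height (gF T δ hδ U τ z) = T.height z := by
    intro τ z h
    rw [geval τ z h]
    exact T.height_restrict _ (by rw [hsigh τ _ (upF_le hδ h).2]; exact h)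
  have gheight' : ∀ τ z, T.height z ≤ δ → T.height (gF' T δ hδ U τ z) = T.height z := by
    intro τ z h
    rw [geval' τ z h]
    exact T.height_restrict _ (by rw [hsig'h τ _ (upF_le hδ h).2]; exact h)
  have gS : ∀ τ s, T.height s = δ → gF T δ hδ U τ s = sigF U τ s := by
    intro τ s hs
    rw [geval τ s (le_of_eq hs), upF_self hδ hs]
    exact restrict_self T ((hsigh τ s hs).trans hs.symm)
  have gS' : ∀ τ s, T.height s = δ → gF' T δ hδ U τ s = sigF' U τ s := by
    intro τ s hs
    rw [geval' τ s (le_of_eq hs), upF_self hδ hs]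
    exact restrict_self T ((hsig'h τ s hs).trans hs.symm)
  have ginv : ∀ τ x, T.height x ≤ δ → gF' T δ hδ U τ (gF T δ hδ U τ x) = x := by
    intro τ x hx
    have hup := upF_le hδ hx
    have hgx := geval τ x hx
    have hgh := gheight τ x hx
    have hgδ : T.height (gF T δ hδ U τ x) ≤ δ := hgh ▸ hx
    have hupg := upF_le hδ hgδ
    have e1 : T.restrict (upF T δ hδ (gF T δ hδ U τ x)) (T.height x) =
        T.restrict (sigF U τ (upF T δ hδ x)) (T.height x) := by
      rw [← hgx]
      exact restrict_of_le T hupg.1 hgh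
    have e2 := (hsig'ag τ _ _ hupg.2 (hsigh τ _ hup.2) (T.height x) hx).mpr e1
    rw [geval' τ _ hgδ, hgh, e2, hsig'sig τ _ hup.2]
    exact restrict_of_le T hup.1 rfl
  have ginv' : ∀ τ x, T.height x ≤ δ → gF T δ hδ U τ (gF' T δ hδ U τ x) = x := by
    intro τ x hx
    have hup := upF_le hδ hx
    have hgx := geval' τ x hx
    have hgh := gheight' τ x hx
    have hgδ : T.height (gF' T δ hδ U τ x) ≤ δ := hgh ▸ hx
    have hupg := upF_le hδ hgδ
    have e1 : T.restrict (upF T δ hδ (gF' T δ hδ U τ x)) (T.height x) =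
        T.restrict (sigF' U τ (upF T δ hδ x)) (T.height x) := by
      rw [← hgx]
      exact restrict_of_le T hupg.1 hgh
    have e2 := (hsigag τ _ _ hupg.2 (hsig'h τ _ hup.2) (T.height x) hx).mp e1
    rw [geval τ _ hgδ, hgh, e2, hsigsig' τ _ hup.2]
    exact restrict_of_le T hup.1 rfl
  have gmono : ∀ τ x y, T.height y ≤ δ → x < y → gF T δ hδ U τ x < gF T δ hδ U τ y := by
    intro τ x y hy hxy
    have hhxy : T.height x < T.height y := T.height_strictMono hxy
    have hx : T.height x ≤ δ := le_trans (le_of_lt hhxy) hy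
    have hupx := upF_le hδ hx
    have hupy := upF_le hδ hy
    have e1 : T.restrict (upF T δ hδ x) (T.height x) = T.restrict (upF T δ hδ y) (T.height x) := by
      rw [restrict_of_le T hupx.1 rfl, restrict_of_le T (le_trans (le_of_lt hxy) hupy.1) rfl]
    have e2 := (hsigag τ _ _ hupx.2 hupy.2 (T.height x) hx).mp e1
    rw [geval τ x hx, geval τ y hy, e2]
    exact restrict_lt_restrict T hhxy (by rw [hsigh τ _ hupy.2]; exact hy)
  have gmono' : ∀ τ x y, T.height y ≤ δ → x < y → gF' T δ hδ U τ x < gF' T δ hδ U τ y := by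
    intro τ x y hy hxy
    have hhxy : T.height x < T.height y := T.height_strictMono hxy
    have hx : T.height x ≤ δ := le_trans (le_of_lt hhxy) hy
    have hupx := upF_le hδ hx
    have hupy := upF_le hδ hy
    have e1 : T.restrict (upF T δ hδ x) (T.height x) = T.restrict (upF T δ hδ y) (T.height x) := by
      rw [restrict_of_le T hupx.1 rfl, restrict_of_le T (le_trans (le_of_lt hxy) hupy.1) rfl]
    have e2 := (hsig'ag τ _ _ hupx.2 hupy.2 (T.height x) hx).mpr e1
    rw [geval' τ x hx, geval' τ y hy, e2]
    exact restrict_lt_restrict T hhxy (by rw [hsig'h τ _ hupy.2]; exact hy)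
  -- extension
  have gext : ∀ τ z, T.height z ≤ lo → gF T δ hδ U τ z = f τ z := by
    intro τ z hzlo
    have hzδ : T.height z ≤ δ := le_trans hzlo hloδ'
    have hup := upF_le hδ hzδ
    have hw : T.height (T.restrict (upF T δ hδ z) lo) = lo :=
      T.height_restrict _ (by rw [hup.2]; exact hloδ')
    have hzw : z ≤ T.restrict (upF T δ hδ z) lo :=
      comparable_of_le_of_le T hup.1 (T.restrict_le _ (by rw [hup.2]; exact hloδ'))
        (by rw [hw]; exact hzlo)
    have hfzw : f τ z ≤ f τ (T.restrict (upF T δ hδ z) lo) := by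
      rcases eq_or_lt_of_le hzw with he | hlt
      · rw [← he]
      · exact le_of_lt ((hf τ).2.2.2.2.1 z _ (le_of_eq hw) hlt)
    have hfzh : T.height (f τ z) = T.height z := (hf τ).1 z hzlo
    have hbd := hUbd τ _ (hsig τ _ hup.2)
    rw [geval τ z hzδ,
      restrict_restrict' T hzlo (by rw [hsigh τ _ hup.2]; exact hloδ'),
      show T.restrict (sigF U τ (upF T δ hδ z)) lo
        = f τ (T.restrict (upF T δ hδ z) lo) from hbd.symm]
    exact restrict_of_le T hfzw hfzh
  have gext' : ∀ τ z, T.height z ≤ lo → gF' T δ hδ U τ z = f' τ z := by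
    intro τ z hzlo
    have hzδ : T.height z ≤ δ := le_trans hzlo hloδ'
    have hup := upF_le hδ hzδ
    have hw : T.height (T.restrict (upF T δ hδ z) lo) = lo :=
      T.height_restrict _ (by rw [hup.2]; exact hloδ')
    have hzw : z ≤ T.restrict (upF T δ hδ z) lo :=
      comparable_of_le_of_le T hup.1 (T.restrict_le _ (by rw [hup.2]; exact hloδ'))
        (by rw [hw]; exact hzlo)
    have hfzw : f' τ z ≤ f' τ (T.restrict (upF T δ hδ z) lo) := by
      rcases eq_or_lt_of_le hzw with he | hlt
      · rw [← he]
      · exact le_of_lt ((hf τ).2.2.2.2.2 z _ (le_of_eq hw) hlt)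
    have hfzh : T.height (f' τ z) = T.height z := (hf τ).2.1 z hzlo
    -- boundary for the inverse map
    have hbd0 := hUbd τ _ (hsig' τ _ hup.2)
    have hsrlo : T.height (T.restrict (sigF' U τ (upF T δ hδ z)) lo) = lo :=
      T.height_restrict _ (by rw [hsig'h τ _ hup.2]; exact hloδ')
    have hbd : T.restrict (sigF' U τ (upF T δ hδ z)) lo
        = f' τ (T.restrict (upF T δ hδ z) lo) := by
      rw [← hbd0]
      exact ((hf τ).2.2.1 _ (le_of_eq hsrlo)).symm
    rw [geval' τ z hzδ,
      restrict_restrict' T hzlo (by rw [hsig'h τ _ hup.2]; exact hloδ'), hbd]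
    exact restrict_of_le T hfzw hfzh
  refine ⟨fun τ => ⟨gheight τ, gheight' τ, ginv τ, ginv' τ, gmono τ, gmono' τ⟩,
    fun τ => ⟨gext τ, gext' τ⟩, ?_, ?_⟩
  · -- consistency
    intro τ hτ x hx y hy
    have hxδ := hXlev x hx
    have hyδ := hXlev y hy
    have hrlo : T.height (T.restrict x lo) ≤ lo :=
      le_of_eq (T.height_restrict _ (by rw [hxδ]; exact hloδ'))
    rw [gext τ _ hrlo, gS τ x hxδ]
    rw [hforced τ hτ x hx y hy]
    constructor
    · intro hU
      exact hUfun τ x _ y (hsig τ x hxδ) hU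
    · intro he
      rw [← he]
      exact hsig τ x hxδ
  · -- separation
    intro hs Y hYfin hYlev
    obtain ⟨n, a, hainj, harange, hasep⟩ := (hsepU hs).2 Y hYfin hYlev
    have haY : ∀ k, T.height (a k) = δ := by
      intro k
      exact hYlev _ (harange ▸ Set.mem_range_self k)
    refine ⟨n, a, hainj, harange, ?_, ?_⟩
    · intro k τ he
      rw [gS τ _ (haY k)] at he
      have hp := hsig τ (a k) (haY k)
      rw [he] at hp
      exact (hsepU hs).1 τ (a k) hp
    · intro k i₁ i₂ m₁ m₂ τ₁ τ₂ hi₁ hi₂ hw₁ hw₂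
      have hgw : ∀ (m : Bool) (τ : ι) (i : Fin n),
          cond m (gF T δ hδ U τ (a k)) (gF' T δ hδ U τ (a k)) = a i →
          cond m ((a k, a i) ∈ U τ) ((a i, a k) ∈ U τ) := by
        intro m τ i hw
        cases m with
        | true =>
          rw [Bool.cond_true] at hw ⊢
          rw [gS τ _ (haY k)] at hw
          exact hw ▸ hsig τ _ (haY k)
        | false =>
          rw [Bool.cond_false] at hw ⊢
          rw [gS' τ _ (haY k)] at hw
          exact hw ▸ hsig' τ _ (haY k)
      exact hasep k i₁ i₂ m₁ m₂ τ₁ τ₂ hi₁ hi₂ (hgw m₁ τ₁ i₁ hw₁) (hgw m₂ τ₂ i₂ hw₂)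

end AFE

open AFE

/-- Proposition 5.15: extension of a countable family of automorphisms from top
level `α` to any higher countable top level `δ`, consistent on a prescribed finite
set `X ⊆ T_δ`, which is separated provided the subfamily indexed by `A` was
separated on `X↾α`. -/
theorem auto_family_extension
    (T : OmegaOneTree α) (lo δ : Ordinal) (hloδ : lo < δ) (hδ : δ < omega1)
    (X : Set α) (hXfin : X.Finite) (hXlev : ∀ x ∈ X, T.height x = δ)
    (hXdrop : Set.InjOn (fun x => T.restrict x lo) X)
    {ι : Type} [Countable ι] (f f' : ι → α → α)
    (hf : ∀ τ, IsTreeAuto T lo (f τ) (f' τ))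
    (A : Set ι) (hAfin : A.Finite) :
    ∃ g g' : ι → α → α,
      (∀ τ, IsTreeAuto T δ (g τ) (g' τ)) ∧
      (∀ τ, AutoExtends T lo (f τ) (f' τ) (g τ) (g' τ)) ∧
      (∀ τ ∈ A, AutoConsistentSet T (g τ) lo X) ∧
      (AutoSepSet (fun τ : ↥A => f τ.1) (fun τ : ↥A => f' τ.1)
          ((fun x => T.restrict x lo) '' X) →
        AutoSeparated T δ g g') := by
  classical
  rcases isEmpty_or_nonempty ι with hι | hι
  · refine ⟨fun _ x => x, fun _ x => x, fun τ => isEmptyElim τ, fun τ => isEmptyElim τ,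
      fun τ _ => isEmptyElim τ, ?_⟩
    intro _ Y hYfin hYlev
    obtain ⟨n, e, hrange⟩ := hYfin.fin_embedding
    exact ⟨n, e, e.injective, hrange,
      fun k τ => isEmptyElim τ, fun k i₁ i₂ m₁ m₂ τ₁ τ₂ => isEmptyElim τ₁⟩
  set HsP : Prop := AutoSepSet (fun τ : ↥A => f τ.1) (fun τ : ↥A => f' τ.1)
    ((fun x => T.restrict x lo) '' X) with hHsP
  obtain ⟨st₀, hst₀, hP₀⟩ := AFE.base (A := A) hloδ hf hXfin hXlev hXdrop
  -- enumerations
  obtain ⟨sE, hsE⟩ := (T.level_countable δ).exists_eq_range (T.level_nonempty δ hδ)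
  have hsE1 : ∀ k, T.height (sE k) = δ := by
    intro k
    have : sE k ∈ {x : α | T.height x = δ} := by rw [hsE]; exact Set.mem_range_self k
    exact this
  have hsE2 : ∀ s : α, T.height s = δ → ∃ k, sE k = s := by
    intro s hs
    have : s ∈ {x : α | T.height x = δ} := hs
    rw [hsE] at this
    exact this
  obtain ⟨rE, hrE⟩ := exists_surjective_nat (ι × ℕ × Bool)
  -- one construction step
  have hstep : ∀ st : St ι α, Inv T lo δ X f A HsP st → ∀ n : ℕ,
      ∃ st', Inv T lo δ X f A HsP st' ∧ Extends st st' ∧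
        ((rE n).2.2 = true → ∃ y, (sE (rE n).2.1, y) ∈ st'.P (rE n).1) ∧
        ((rE n).2.2 = false → ∃ x, (x, sE (rE n).2.1) ∈ st'.P (rE n).1) := by
    intro st h n
    cases hb : (rE n).2.2 with
    | true =>
      obtain ⟨st', h', hext, hy⟩ := stepF hloδ hδ hf h (rE n).1 (sE (rE n).2.1) (hsE1 _)
      exact ⟨st', h', hext, fun _ => hy, fun hc => absurd hc (by simp)⟩
    | false =>
      obtain ⟨st', h', hext, hx⟩ := stepB hloδ hδ hf h (rE n).1 (sE (rE n).2.1) (hsE1 _)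
      exact ⟨st', h', hext, fun hc => absurd hc (by simp), fun _ => hx⟩
  -- the chain
  let seq : ℕ → {st : St ι α // Inv T lo δ X f A HsP st} := fun n =>
    Nat.rec ⟨st₀, hst₀⟩ (fun n p => ⟨(hstep p.1 p.2 n).choose, (hstep p.1 p.2 n).choose_spec.1⟩) n
  have hext : ∀ n, Extends (seq n).1 (seq (n+1)).1 :=
    fun n => (hstep (seq n).1 (seq n).2 n).choose_spec.2.1
  have hdone1 : ∀ n, (rE n).2.2 = true →
      ∃ y, (sE (rE n).2.1, y) ∈ (seq (n+1)).1.P (rE n).1 :=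
    fun n => (hstep (seq n).1 (seq n).2 n).choose_spec.2.2.1
  have hdone2 : ∀ n, (rE n).2.2 = false →
      ∃ x, (x, sE (rE n).2.1) ∈ (seq (n+1)).1.P (rE n).1 :=
    fun n => (hstep (seq n).1 (seq n).2 n).choose_spec.2.2.2
  have hmono : ∀ m n, m ≤ n → Extends (seq m).1 (seq n).1 := by
    intro m n hmn
    induction n, hmn using Nat.le_induction with
    | base => exact Extends.rfl
    | succ n hmn ih => exact ih.trans (hext n)
  -- the limit
  set U : ι → Set (α × α) := fun τ => ⋃ n, (seq n).1.P τ with hU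
  have hUst : ∀ τ (q : α × α), q ∈ U τ → ∃ n, q ∈ (seq n).1.P τ := by
    intro τ q hq
    exact Set.mem_iUnion.mp hq
  have hstU : ∀ τ (q : α × α) (n : ℕ), q ∈ (seq n).1.P τ → q ∈ U τ := by
    intro τ q n hq
    exact Set.mem_iUnion.mpr ⟨n, hq⟩
  have hU2stage : ∀ (τ τ' : ι) (q q' : α × α), q ∈ U τ → q' ∈ U τ' →
      ∃ N, q ∈ (seq N).1.P τ ∧ q' ∈ (seq N).1.P τ' := by
    intro τ τ' q q' hq hq'
    obtain ⟨n, hn⟩ := hUst τ q hq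
    obtain ⟨n', hn'⟩ := hUst τ' q' hq'
    exact ⟨max n n', (hmono n _ (le_max_left n n')).1 τ hn,
      (hmono n' _ (le_max_right n n')).1 τ' hn'⟩
  have hU1 : ∀ τ, ∀ q ∈ U τ, T.height q.1 = δ := by
    intro τ q hq
    obtain ⟨n, hn⟩ := hUst τ q hq
    exact (seq n).2.hts1 τ q hn
  have hU2 : ∀ τ, ∀ q ∈ U τ, T.height q.2 = δ := by
    intro τ q hq
    obtain ⟨n, hn⟩ := hUst τ q hq
    exact (seq n).2.hts2 τ q hn
  have hUbd : ∀ τ, ∀ q ∈ U τ, f τ (T.restrict q.1 lo) = T.restrict q.2 lo := by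
    intro τ q hq
    obtain ⟨n, hn⟩ := hUst τ q hq
    exact (seq n).2.bd τ q hn
  have hUag : ∀ τ, ∀ q ∈ U τ, ∀ q' ∈ U τ, ∀ β ≤ δ,
      (T.restrict q.1 β = T.restrict q'.1 β ↔ T.restrict q.2 β = T.restrict q'.2 β) := by
    intro τ q hq q' hq' β hβ
    obtain ⟨N, hN, hN'⟩ := hU2stage τ τ q q' hq hq'
    exact (seq N).2.ag τ q hN q' hN' β hβ
  have htot : ∀ (τ : ι) (s : α), T.height s = δ → ∃ y, (s, y) ∈ U τ := by
    intro τ s hs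
    obtain ⟨k, hk⟩ := hsE2 s hs
    obtain ⟨n, hn⟩ := hrE (τ, k, true)
    have h1 : (rE n).2.2 = true := by rw [hn]
    obtain ⟨y, hy⟩ := hdone1 n h1
    rw [hn] at hy
    dsimp only at hy
    rw [hk] at hy
    exact ⟨y, hstU τ _ (n+1) hy⟩
  have hcotot : ∀ (τ : ι) (s : α), T.height s = δ → ∃ x, (x, s) ∈ U τ := by
    intro τ s hs
    obtain ⟨k, hk⟩ := hsE2 s hs
    obtain ⟨n, hn⟩ := hrE (τ, k, false)
    have h1 : (rE n).2.2 = false := by rw [hn]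
    obtain ⟨x, hx⟩ := hdone2 n h1
    rw [hn] at hx
    dsimp only at hx
    rw [hk] at hx
    exact ⟨x, hstU τ _ (n+1) hx⟩
  have hforced : ∀ τ ∈ A, ∀ x ∈ X, ∀ y ∈ X,
      (f τ (T.restrict x lo) = T.restrict y lo ↔ (x, y) ∈ U τ) := by
    intro τ hτ x hx y hy
    constructor
    · intro hfr
      exact hstU τ _ 0 ((seq 0).2.forced1 τ hτ x hx y hy hfr)
    · intro hU'
      obtain ⟨n, hn⟩ := hUst τ _ hU'
      exact (seq n).2.forced2 τ hτ x hx y hy hn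
  have hprefget : ∀ {L L' : List α}, L <+: L' → ∀ {i : ℕ} {z : α},
      L[i]? = some z → L'[i]? = some z := by
    intro L L' hp i z hz
    obtain ⟨t, rfl⟩ := hp
    rw [AFE.getElem?_append_of_lt (AFE.idx_lt_length hz)]
    exact hz
  -- the separation data
  have hsepU : HsP → (∀ (τ : ι) (z : α), (z, z) ∉ U τ) ∧
      ∀ Y : Set α, Y.Finite → (∀ z ∈ Y, T.height z = δ) →
        ∃ (n : ℕ) (a : Fin n → α), Function.Injective a ∧ Set.range a = Y ∧
          ∀ (k i₁ i₂ : Fin n) (m₁ m₂ : Bool) (τ₁ τ₂ : ι), i₁ < k → i₂ < k →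
            (cond m₁ ((a k, a i₁) ∈ U τ₁) ((a i₁, a k) ∈ U τ₁)) →
            (cond m₂ ((a k, a i₂) ∈ U τ₂) ((a i₂, a k) ∈ U τ₂)) →
            i₁ = i₂ ∧ m₁ = m₂ ∧ τ₁ = τ₂ := by
    intro hs
    constructor
    · intro τ z hz
      obtain ⟨n, hn⟩ := hUst τ _ hz
      exact ((seq n).2.sep hs).1 τ z hn
    · intro Y hYfin hYlev
      obtain ⟨τ₀⟩ := hι
      have hYmem : ∀ z ∈ Y, ∃ n : ℕ, z ∈ (seq n).1.L := by
        intro z hz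
        obtain ⟨y, hy⟩ := htot τ₀ z (hYlev z hz)
        obtain ⟨n, hn⟩ := hUst τ₀ _ hy
        exact ⟨n, ((seq n).2.memL τ₀ _ hn).1⟩
      have hYNaux : ∀ s : Set α, s.Finite →
          (∀ z ∈ s, ∃ n : ℕ, z ∈ (seq n).1.L) → ∃ N, ∀ z ∈ s, z ∈ (seq N).1.L := by
        intro s hsfin
        refine Set.Finite.induction_on (motive := fun s _ => (∀ z ∈ s, ∃ n : ℕ, z ∈ (seq n).1.L) →
          ∃ N, ∀ z ∈ s, z ∈ (seq N).1.L) s hsfin (fun _ => ⟨0, by simp⟩) ?_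
        rintro z s hzs hsfin2 ih hall
        obtain ⟨n, hn⟩ := hall z (Set.mem_insert z s)
        obtain ⟨N, hN⟩ := ih (fun w hw => hall w (Set.mem_insert_of_mem z hw))
        refine ⟨max n N, ?_⟩
        intro w hw
        rcases hw with rfl | hw
        · exact (hmono n _ (le_max_left n N)).2.subset hn
        · exact (hmono N _ (le_max_right n N)).2.subset (hN w hw)
      obtain ⟨N, hN⟩ := hYNaux Y hYfin hYmem
      -- index in the stage-N list
      set idx : α → ℕ := fun z =>
        if h : ∃ i : ℕ, (seq N).1.L[i]? = some z then h.choose else 0 with hidxdef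
      have hidxY : ∀ z ∈ Y, (seq N).1.L[idx z]? = some z := by
        intro z hz
        have hex : ∃ i : ℕ, (seq N).1.L[i]? = some z :=
          AFE.exists_getElem?_of_mem (hN z hz)
        rw [hidxdef]
        dsimp only
        rw [dif_pos hex]
        exact hex.choose_spec
      have hidxinj : ∀ z ∈ Y, ∀ z' ∈ Y, idx z = idx z' → z = z' := by
        intro z hz z' hz' he
        have h1 := hidxY z hz
        have h2 := hidxY z' hz'
        rw [he] at h1
        rw [h1] at h2
        exact Option.some_inj.mp h2
      set J : Finset ℕ := hYfin.toFinset.image idx with hJdef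
      set oi := J.orderIsoOfFin rfl with hoidef
      have haux : ∀ j : {x // x ∈ J}, ∃ z, z ∈ Y ∧ idx z = (j : ℕ) := by
        rintro ⟨j, hj⟩
        rw [hJdef] at hj
        obtain ⟨z, hz, he⟩ := Finset.mem_image.mp hj
        exact ⟨z, hYfin.mem_toFinset.mp hz, he⟩
      choose aF haF1 haF2 using haux
      set a : Fin J.card → α := fun k => aF (oi k) with hadef
      have haY : ∀ k, a k ∈ Y := fun k => haF1 (oi k)
      have haidx : ∀ k, idx (a k) = (oi k : ℕ) := fun k => haF2 (oi k)
      have hainj : Function.Injective a := by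
        intro k k' he
        have : (oi k : ℕ) = (oi k' : ℕ) := by
          rw [← haidx k, ← haidx k', he]
        exact oi.injective (Subtype.ext this)
      have harange : Set.range a = Y := by
        apply Set.eq_of_subset_of_subset
        · rintro z ⟨k, rfl⟩
          exact haY k
        · intro z hz
          have hj : idx z ∈ J := by
            rw [hJdef]
            exact Finset.mem_image.mpr ⟨z, hYfin.mem_toFinset.mpr hz, rfl⟩
          refine ⟨oi.symm ⟨idx z, hj⟩, ?_⟩
          apply hidxinj _ (haY _) _ hz
          rw [haidx]
          rw [OrderIso.apply_symm_apply]
      have haord : ∀ k k' : Fin J.card, k < k' → idx (a k) < idx (a k') := by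
        intro k k' hlt
        rw [haidx, haidx]
        exact Subtype.coe_lt_coe.mpr (oi.lt_iff_lt.mpr hlt)
      refine ⟨J.card, a, hainj, harange, ?_⟩
      intro k i₁ i₂ m₁ m₂ τ₁ τ₂ hi₁ hi₂ hw₁ hw₂
      have hwp : ∀ (m : Bool) (τ : ι) (i : Fin J.card),
          (cond m ((a k, a i) ∈ U τ) ((a i, a k) ∈ U τ)) →
          ∃ M, N ≤ M ∧ AFE.Rel (seq M).1.P m τ (a k) (a i) := by
        intro m τ i hw
        cases m with
        | true =>
          rw [Bool.cond_true] at hw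
          obtain ⟨n, hn⟩ := hUst τ _ hw
          exact ⟨max n N, le_max_right n N,
            show (a k, a i) ∈ (seq (max n N)).1.P τ from (hmono n _ (le_max_left n N)).1 τ hn⟩
        | false =>
          rw [Bool.cond_false] at hw
          obtain ⟨n, hn⟩ := hUst τ _ hw
          exact ⟨max n N, le_max_right n N,
            show (a i, a k) ∈ (seq (max n N)).1.P τ from (hmono n _ (le_max_left n N)).1 τ hn⟩
      obtain ⟨M₁, hM₁N, hR₁⟩ := hwp m₁ τ₁ i₁ hw₁
      obtain ⟨M₂, hM₂N, hR₂⟩ := hwp m₂ τ₂ i₂ hw₂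
      set M := max M₁ M₂ with hMdef
      have hNM : N ≤ M := le_trans hM₁N (le_max_left M₁ M₂)
      have hR₁' : AFE.Rel (seq M).1.P m₁ τ₁ (a k) (a i₁) := by
        unfold AFE.Rel at hR₁ ⊢
        exact (hmono M₁ M (le_max_left M₁ M₂)).1 τ₁ hR₁
      have hR₂' : AFE.Rel (seq M).1.P m₂ τ₂ (a k) (a i₂) := by
        unfold AFE.Rel at hR₂ ⊢
        exact (hmono M₂ M (le_max_right M₁ M₂)).1 τ₂ hR₂
      have hget : ∀ z ∈ Y, (seq M).1.L[idx z]? = some z :=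
        fun z hz => hprefget (hmono N M hNM).2 (hidxY z hz)
      have := ((seq M).2.sep hs).2 (idx (a i₁)) (idx (a i₂)) (idx (a k))
        (a k) (a i₁) (a i₂) m₁ m₂ τ₁ τ₂
        (haord i₁ k hi₁) (haord i₂ k hi₂)
        (hget _ (haY k)) (hget _ (haY i₁)) (hget _ (haY i₂)) hR₁' hR₂'
      exact ⟨hainj this.1, this.2.1, this.2.2⟩
  obtain ⟨c1, c2, c3, c4⟩ :=
    AFE.assemble hloδ hδ hf U hU1 hU2 hUbd hUag htot hcotot hforced hXlev hsepU
  exact ⟨gF T δ hδ U, gF' T δ hδ U, c1, c2, c3, c4⟩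
end
end

section
/- Let α < ω₁ and let {g_τ : τ ∈ I} be a countable indexed family of automorphisms of T↾(α+1). Then {g_τ : τ ∈ I} is separated if and only if for every finite A ⊆ I and every finite X ⊆ T_α, the subfamily {g_τ : τ ∈ A} is separated on X. (This is the paper's Lemma 5.30, stated there for conditions p of the automorphism forcing with A ⊆ dom(p).) -/
noncomputable section

variable {α : Type} [PartialOrder α]

/-- Unbundled version of `AutoSepTuple` for the subfamily indexed by `A`. -/
def Good {ι : Type} (g g' : ι → α → α) (A : Set ι) {n : ℕ} (a : Fin n → α) : Prop :=
  (∀ k : Fin n, ∀ τ ∈ A, g τ (a k) ≠ a k) ∧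
  ∀ (k i₁ i₂ : Fin n) (m₁ m₂ : Bool), ∀ τ₁ ∈ A, ∀ τ₂ ∈ A, i₁ < k → i₂ < k →
    cond m₁ (g τ₁ (a k)) (g' τ₁ (a k)) = a i₁ →
    cond m₂ (g τ₂ (a k)) (g' τ₂ (a k)) = a i₂ →
    i₁ = i₂ ∧ m₁ = m₂ ∧ τ₁ = τ₂

theorem good_iff {ι : Type} (g g' : ι → α → α) (A : Set ι) {n : ℕ} (a : Fin n → α) :
    AutoSepTuple (fun τ : ↥A => g τ.1) (fun τ : ↥A => g' τ.1) a ↔ Good g g' A a := by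
  constructor
  · rintro ⟨h1, h2⟩
    refine ⟨fun k τ hτ => h1 k ⟨τ, hτ⟩, ?_⟩
    intro k i₁ i₂ m₁ m₂ τ₁ hτ₁ τ₂ hτ₂ hi₁ hi₂ e₁ e₂
    obtain ⟨hi, hm, hτ⟩ := h2 k i₁ i₂ m₁ m₂ ⟨τ₁, hτ₁⟩ ⟨τ₂, hτ₂⟩ hi₁ hi₂ e₁ e₂
    exact ⟨hi, hm, congrArg Subtype.val hτ⟩
  · rintro ⟨h1, h2⟩
    refine ⟨fun k τ => h1 k τ.1 τ.2, ?_⟩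
    intro k i₁ i₂ m₁ m₂ τ₁ τ₂ hi₁ hi₂ e₁ e₂
    obtain ⟨hi, hm, hτ⟩ := h2 k i₁ i₂ m₁ m₂ τ₁.1 τ₁.2 τ₂.1 τ₂.2 hi₁ hi₂ e₁ e₂
    exact ⟨hi, hm, Subtype.ext hτ⟩

theorem good_univ_iff {ι : Type} (g g' : ι → α → α) {n : ℕ} (a : Fin n → α) :
    AutoSepTuple g g' a ↔ Good g g' Set.univ a := by
  constructor
  · rintro ⟨h1, h2⟩
    exact ⟨fun k τ _ => h1 k τ,
      fun k i₁ i₂ m₁ m₂ τ₁ _ τ₂ _ hi₁ hi₂ e₁ e₂ => h2 k i₁ i₂ m₁ m₂ τ₁ τ₂ hi₁ hi₂ e₁ e₂⟩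
  · rintro ⟨h1, h2⟩
    exact ⟨fun k τ => h1 k τ (Set.mem_univ τ),
      fun k i₁ i₂ m₁ m₂ τ₁ τ₂ hi₁ hi₂ e₁ e₂ =>
        h2 k i₁ i₂ m₁ m₂ τ₁ (Set.mem_univ τ₁) τ₂ (Set.mem_univ τ₂) hi₁ hi₂ e₁ e₂⟩

theorem good_mono {ι : Type} (g g' : ι → α → α) {A B : Set ι} (hAB : A ⊆ B) {n : ℕ}
    {a : Fin n → α} (h : Good g g' B a) : Good g g' A a :=
  ⟨fun k τ hτ => h.1 k τ (hAB hτ),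
    fun k i₁ i₂ m₁ m₂ τ₁ hτ₁ τ₂ hτ₂ => h.2 k i₁ i₂ m₁ m₂ τ₁ (hAB hτ₁) τ₂ (hAB hτ₂)⟩

/-- Lemma 5.30: a countable indexed family of automorphisms of `T↾(lev+1)` is
separated if and only if every finite subfamily is separated on every finite
subset of the level `T_lev`. -/
theorem auto_separated_iff_finite_subfamilies
    (T : OmegaOneTree α) (lev : Ordinal) (hlev : lev < omega1)
    {ι : Type} [Countable ι] (g g' : ι → α → α)
    (hg : ∀ τ, IsTreeAuto T lev (g τ) (g' τ)) :
    AutoSeparated T lev g g' ↔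
      ∀ A : Set ι, A.Finite → ∀ X : Set α, X.Finite → (∀ x ∈ X, T.height x = lev) →
        AutoSepSet (fun τ : ↥A => g τ.1) (fun τ : ↥A => g' τ.1) X := by
  constructor
  · intro hsep A hA X hX hXlev
    obtain ⟨k, a, ha_inj, ha_rng, ha_sep⟩ := hsep X hX hXlev
    exact ⟨k, a, ha_inj, ha_rng, (good_iff g g' A a).mpr
      (good_mono g g' (Set.subset_univ A) ((good_univ_iff g g' a).mp ha_sep))⟩
  · intro h X hX hXlev
    rcases isEmpty_or_nonempty ι with hι | hι
    · obtain ⟨k, a, ha_inj, ha_rng, _⟩ :=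
        h ∅ Set.finite_empty X hX hXlev
      exact ⟨k, a, ha_inj, ha_rng, fun k τ => hι.elim τ,
        fun k i₁ i₂ m₁ m₂ τ₁ τ₂ => hι.elim τ₁⟩
    · obtain ⟨f, hf⟩ := exists_surjective_nat ι
      set A : ℕ → Set ι := fun m => f '' Set.Iic m with hA
      have hAfin : ∀ m, (A m).Finite := fun m => (Set.finite_Iic m).image f
      have hAmono : ∀ {m m' : ℕ}, m ≤ m' → A m ⊆ A m' :=
        fun {m m'} hmm => Set.image_mono (f := f) (Set.Iic_subset_Iic.mpr hmm)
      haveI : Finite ↥X := hX.to_subtype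
      have key : ∀ m : ℕ, ∃ b : Fin X.ncard → ↥X,
          Function.Injective (fun i => (b i : α)) ∧
          Set.range (fun i => (b i : α)) = X ∧
          Good g g' (A m) (fun i => (b i : α)) := by
        intro m
        obtain ⟨k, a, ha_inj, ha_rng, ha_sep⟩ := h (A m) (hAfin m) X hX hXlev
        have hk : k = X.ncard := by
          have h1 : Nat.card ↥(Set.range a) = Nat.card (Fin k) :=
            Nat.card_range_of_injective ha_inj
          rw [ha_rng, Nat.card_coe_set_eq, Nat.card_eq_fintype_card,
            Fintype.card_fin] at h1
          exact h1.symm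
        subst hk
        refine ⟨fun i => ⟨a i, by rw [← ha_rng]; exact Set.mem_range_self i⟩, ?_, ?_, ?_⟩
        · exact ha_inj
        · exact ha_rng
        · exact (good_iff g g' (A m) a).mp ha_sep
      choose c hc using key
      obtain ⟨y, hy⟩ := Finite.exists_infinite_fiber c
      have hy' : (c ⁻¹' {y}).Infinite := Set.infinite_coe_iff.mp hy
      have hcof : ∀ m : ℕ, ∃ m' : ℕ, m ≤ m' ∧ c m' = y := by
        intro m
        obtain ⟨m', hm', hlt⟩ := hy'.exists_gt m
        exact ⟨m', le_of_lt hlt, hm'⟩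
      set b : Fin X.ncard → α := fun i => (y i : α) with hb
      have hgood : ∀ m : ℕ, Good g g' (A m) b := by
        intro m
        obtain ⟨m', hmm', hcm'⟩ := hcof m
        have := (hc m').2.2
        rw [hcm'] at this
        exact good_mono g g' (hAmono hmm') this
      obtain ⟨m₀, hm₀⟩ := hcof 0
      have hinj : Function.Injective b := by
        have h1 := (hc m₀).1
        rw [hm₀.2] at h1
        exact h1
      have hrng : Set.range b = X := by
        have h1 := (hc m₀).2.1
        rw [hm₀.2] at h1
        exact h1
      have huniv : Good g g' Set.univ b := by
        constructor
        · intro k τ _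
          obtain ⟨m, rfl⟩ := hf τ
          exact (hgood m).1 k (f m) ⟨m, Set.mem_Iic.mpr le_rfl, rfl⟩
        · intro k i₁ i₂ m₁ m₂ τ₁ _ τ₂ _ hi₁ hi₂ e₁ e₂
          obtain ⟨n₁, rfl⟩ := hf τ₁
          obtain ⟨n₂, rfl⟩ := hf τ₂
          exact (hgood (max n₁ n₂)).2 k i₁ i₂ m₁ m₂
            (f n₁) ⟨n₁, Set.mem_Iic.mpr (le_max_left n₁ n₂), rfl⟩
            (f n₂) ⟨n₂, Set.mem_Iic.mpr (le_max_right n₁ n₂), rfl⟩ hi₁ hi₂ e₁ e₂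
      exact ⟨X.ncard, b, hinj, hrng, (good_univ_iff g g' b).mpr huniv⟩
end
end

section
/- Let γ < ω₁, let {f_τ : τ ∈ I} be a countable indexed family of automorphisms of T↾(γ+1), and let A ⊆ B ⊆ I be finite. Let Y, Z ⊆ T_{γ+1} be finite sets, each with unique drop-downs to γ, such that Y ∩ Z = ∅. Then there exists an indexed family {g_τ : τ ∈ I} of automorphisms of T↾(γ+2) such that: (1) f_τ ⊆ g_τ for all τ ∈ I; (2) for all τ ∈ B, Y↾γ and Y are g_τ-consistent; (3) for all τ ∈ A, Z↾γ and Z are g_τ-consistent; and (4) for all τ ∈ B \ A and all x ∈ Z, g_τ(x) ∉ Y ∪ Z and g_τ^{-1}(x) ∉ Y ∪ Z. -/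
noncomputable section

variable {α : Type} [PartialOrder α]

open Classical in
lemma exists_bij_extend {α : Type} (F G S : Set α) (hFc : F.Countable) (hFi : F.Infinite)
    (hGc : G.Countable) (hGi : G.Infinite) (hSfin : S.Finite) (hSF : S ⊆ F)
    (t : α → α) (ht : Set.InjOn t S) (htG : ∀ x ∈ S, t x ∈ G) :
    ∃ φ φ' : α → α, (∀ x ∈ F, φ x ∈ G ∧ φ' (φ x) = x) ∧
      (∀ y ∈ G, φ' y ∈ F ∧ φ (φ' y) = y) ∧ (∀ x ∈ S, φ x = t x) := by
  have hF'c : (F \ S).Countable := hFc.mono Set.diff_subset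
  have hF'i : (F \ S).Infinite := hFi.diff hSfin
  have hG'c : (G \ t '' S).Countable := hGc.mono Set.diff_subset
  have hG'i : (G \ t '' S).Infinite := hGi.diff (hSfin.image t)
  haveI := hF'c.to_subtype
  haveI := hF'i.to_subtype
  haveI := hG'c.to_subtype
  haveI := hG'i.to_subtype
  obtain ⟨e⟩ : Nonempty ((F \ S : Set α) ≃ (G \ t '' S : Set α)) := nonempty_equiv_of_countable
  refine ⟨fun x => if hx : x ∈ S then t x else if hx' : x ∈ F then (e ⟨x, hx', hx⟩ : α) else x,
    fun y => if hy : y ∈ t '' S then hy.choose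
      else if hy' : y ∈ G then (e.symm ⟨y, hy', hy⟩ : α) else y, ?_, ?_, ?_⟩
  · intro x hxF
    by_cases hx : x ∈ S
    · simp only [dif_pos hx]
      refine ⟨htG x hx, ?_⟩
      have htx : t x ∈ t '' S := ⟨x, hx, rfl⟩
      simp only [dif_pos htx]
      exact ht htx.choose_spec.1 hx htx.choose_spec.2
    · simp only [dif_neg hx, dif_pos hxF]
      have hp := (e ⟨x, hxF, hx⟩).2
      refine ⟨hp.1, ?_⟩
      simp only [dif_neg hp.2, dif_pos hp.1]
      have : (⟨((e ⟨x, hxF, hx⟩ : (G \ t '' S : Set α)) : α), hp.1, hp.2⟩ :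
          (G \ t '' S : Set α)) = e ⟨x, hxF, hx⟩ := rfl
      rw [this, Equiv.symm_apply_apply]
  · intro y hyG
    by_cases hy : y ∈ t '' S
    · simp only [dif_pos hy]
      refine ⟨hSF hy.choose_spec.1, ?_⟩
      simp only [dif_pos hy.choose_spec.1]
      exact hy.choose_spec.2
    · simp only [dif_neg hy, dif_pos hyG]
      have hq := (e.symm ⟨y, hyG, hy⟩).2
      refine ⟨hq.1, ?_⟩
      simp only [dif_neg hq.2, dif_pos hq.1]
      have : (⟨((e.symm ⟨y, hyG, hy⟩ : (F \ S : Set α)) : α), hq.1, hq.2⟩ :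
          (F \ S : Set α)) = e.symm ⟨y, hyG, hy⟩ := rfl
      rw [this, Equiv.apply_symm_apply]
  · intro x hx
    simp only [dif_pos hx]

open Classical in
lemma fiber_bij {α : Type} (F G Y Z : Set α)
    (hFc : F.Countable) (hFi : F.Infinite) (hGc : G.Countable) (hGi : G.Infinite)
    (hYfin : Y.Finite) (hZfin : Z.Finite) (hYZ : ∀ a, a ∈ Y → a ∈ Z → False)
    (hYF : (Y ∩ F).Subsingleton) (hZF : (Z ∩ F).Subsingleton)
    (hYG : (Y ∩ G).Subsingleton) (hZG : (Z ∩ G).Subsingleton)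
    (bZ bA : Prop) (hAZ : bA → ¬bZ) :
    ∃ φ φ' : α → α, (∀ x ∈ F, φ x ∈ G ∧ φ' (φ x) = x) ∧
      (∀ y ∈ G, φ' y ∈ F ∧ φ (φ' y) = y) ∧
      (∀ x ∈ Y ∩ F, ∀ y ∈ Y ∩ G, φ x = y) ∧
      (bZ → ∀ x ∈ Z ∩ F, ∀ z ∈ Z ∩ G, φ x = z) ∧
      (bA → ∀ x ∈ Z ∩ F, φ x ∉ Y ∪ Z) ∧
      (bA → ∀ z ∈ Z ∩ G, φ' z ∉ Y ∪ Z) := by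
  obtain ⟨w₁, hw₁⟩ := (hGi.diff (hYfin.union hZfin)).nonempty
  obtain ⟨w₂, hw₂⟩ := (hGi.diff ((hYfin.union hZfin).union (Set.finite_singleton w₁))).nonempty
  set t : α → α := fun x => if x ∈ Y then (if h : (Y ∩ G).Nonempty then h.choose else w₁)
      else (if h : bZ ∧ (Z ∩ G).Nonempty then h.2.choose else w₂) with htdef
  have hty : ∀ x, x ∈ Y → t x ∈ Y ∩ G ∨ t x = w₁ := by
    intro x hx
    by_cases h : (Y ∩ G).Nonempty
    · left; simp only [htdef, if_pos hx, dif_pos h]; exact h.choose_spec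
    · right; simp only [htdef, if_pos hx, dif_neg h]
  have htz : ∀ x, x ∉ Y → t x ∈ Z ∩ G ∨ t x = w₂ := by
    intro x hx
    by_cases h : bZ ∧ (Z ∩ G).Nonempty
    · left; simp only [htdef, if_neg hx, dif_pos h]; exact h.2.choose_spec
    · right; simp only [htdef, if_neg hx, dif_neg h]
  have ht1 : ∀ x, x ∈ Y → ∀ y ∈ Y ∩ G, t x = y := by
    intro x hx y hy
    have hne : (Y ∩ G).Nonempty := ⟨y, hy⟩
    simp only [htdef, if_pos hx, dif_pos hne]
    exact hYG hne.choose_spec hy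
  have ht2 : ∀ x, x ∉ Y → bZ → ∀ z ∈ Z ∩ G, t x = z := by
    intro x hx hbZ z hz
    have hne : bZ ∧ (Z ∩ G).Nonempty := ⟨hbZ, z, hz⟩
    simp only [htdef, if_neg hx, dif_pos hne]
    exact hZG hne.2.choose_spec hz
  have ht3 : ∀ x, x ∉ Y → ¬bZ → t x = w₂ := by
    intro x hx hbZ
    simp only [htdef, if_neg hx, dif_neg (fun h : bZ ∧ _ => hbZ h.1)]
  have hinj : Set.InjOn t ((Y ∪ Z) ∩ F) := by
    intro a ha b hb hab
    by_cases haY : a ∈ Y <;> by_cases hbY : b ∈ Y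
    · exact hYF ⟨haY, ha.2⟩ ⟨hbY, hb.2⟩
    · exfalso
      rcases hty a haY with h1 | h1 <;> rcases htz b hbY with h2 | h2
      · exact hYZ (t a) h1.1 (hab ▸ h2.1)
      · rw [hab, h2] at h1; exact hw₂.2 (Or.inl (Or.inl h1.1))
      · rw [hab] at h1; rw [h1] at h2; exact hw₁.2 (Or.inr h2.1)
      · rw [hab, h2] at h1; exact hw₂.2 (Or.inr h1)
    · exfalso
      rcases hty b hbY with h1 | h1 <;> rcases htz a haY with h2 | h2
      · exact hYZ (t b) h1.1 (hab ▸ h2.1)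
      · rw [← hab, h2] at h1; exact hw₂.2 (Or.inl (Or.inl h1.1))
      · rw [← hab] at h1; rw [h1] at h2; exact hw₁.2 (Or.inr h2.1)
      · rw [← hab, h2] at h1; exact hw₂.2 (Or.inr h1)
    · have haZ : a ∈ Z := ha.1.resolve_left haY
      have hbZ : b ∈ Z := hb.1.resolve_left hbY
      exact hZF ⟨haZ, ha.2⟩ ⟨hbZ, hb.2⟩
  have htG : ∀ x ∈ (Y ∪ Z) ∩ F, t x ∈ G := by
    intro x hx
    by_cases hxY : x ∈ Y
    · rcases hty x hxY with h | h
      · exact h.2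
      · rw [h]; exact hw₁.1
    · rcases htz x hxY with h | h
      · exact h.2
      · rw [h]; exact hw₂.1
  obtain ⟨φ, φ', h1, h2, h3⟩ := exists_bij_extend F G ((Y ∪ Z) ∩ F) hFc hFi hGc hGi
    ((hYfin.union hZfin).inter_of_left F) Set.inter_subset_right t hinj htG
  refine ⟨φ, φ', h1, h2, ?_, ?_, ?_, ?_⟩
  · intro x hx y hy
    rw [h3 x ⟨Or.inl hx.1, hx.2⟩]
    exact ht1 x hx.1 y hy
  · intro hbZ x hx z hz
    rw [h3 x ⟨Or.inr hx.1, hx.2⟩]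
    exact ht2 x (fun h => hYZ x h hx.1) hbZ z hz
  · intro hbA x hx
    rw [h3 x ⟨Or.inr hx.1, hx.2⟩, ht3 x (fun h => hYZ x h hx.1) (hAZ hbA)]
    exact fun h => hw₂.2 (Or.inl h)
  · intro hbA z hz hmem
    have hzF : φ' z ∈ F := (h2 z hz.2).1
    have hzS : φ' z ∈ (Y ∪ Z) ∩ F := ⟨hmem, hzF⟩
    have heq : t (φ' z) = z := by rw [← h3 _ hzS]; exact (h2 z hz.2).2
    by_cases hY : φ' z ∈ Y
    · rcases hty _ hY with h | h
      · exact hYZ z (heq ▸ h.1) hz.1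
      · rw [heq] at h; exact hw₁.2 (Or.inr (h ▸ hz.1))
    · rw [ht3 _ hY (hAZ hbA)] at heq
      exact hw₂.2 (Or.inl (Or.inr (heq ▸ hz.1)))

/-- Lemma 5.39: one-step extension of a countable family of automorphisms which is
consistent on `Y` for indices in `B`, consistent on `Z` for indices in `A`, and
moves elements of `Z` out of `Y ∪ Z` for indices in `B \ A`. -/
theorem auto_family_extension_avoiding
    (T : OmegaOneTree α) (γ : Ordinal) (hγ : γ < omega1)
    {ι : Type} [Countable ι] (f f' : ι → α → α)
    (hf : ∀ τ, IsTreeAuto T γ (f τ) (f' τ))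
    (A B : Set ι) (hAB : A ⊆ B) (hAfin : A.Finite) (hBfin : B.Finite)
    (Y Z : Set α) (hYfin : Y.Finite) (hZfin : Z.Finite)
    (hYlev : ∀ x ∈ Y, T.height x = γ + 1) (hZlev : ∀ x ∈ Z, T.height x = γ + 1)
    (hYdrop : Set.InjOn (fun x => T.restrict x γ) Y)
    (hZdrop : Set.InjOn (fun x => T.restrict x γ) Z)
    (hYZ : Y ∩ Z = ∅) :
    ∃ g g' : ι → α → α,
      (∀ τ, IsTreeAuto T (γ + 1) (g τ) (g' τ)) ∧
      (∀ τ, AutoExtends T γ (f τ) (f' τ) (g τ) (g' τ)) ∧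
      (∀ τ ∈ B, AutoConsistentSet T (g τ) γ Y) ∧
      (∀ τ ∈ A, AutoConsistentSet T (g τ) γ Z) ∧
      (∀ τ ∈ B, τ ∉ A → ∀ x ∈ Z, g τ x ∉ Y ∪ Z ∧ g' τ x ∉ Y ∪ Z) := by
  classical
  have hsucc : γ < γ + 1 := by
    rw [Ordinal.add_one_eq_succ]; exact Order.lt_succ γ
  have hlt_split : ∀ β : Ordinal, β < γ + 1 → β ≤ γ := by
    intro β h; rw [Ordinal.add_one_eq_succ] at h; exact Order.lt_succ_iff.mp h
  have hle_split : ∀ β : Ordinal, β ≤ γ + 1 → β ≤ γ ∨ β = γ + 1 := by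
    intro β h
    rcases lt_or_eq_of_le h with h | h
    · exact Or.inl (hlt_split β h)
    · exact Or.inr h
  set Fib : α → Set α := fun u => {y : α | T.height y = γ + 1 ∧ T.restrict y γ = u} with hFibdef
  have hFibmem : ∀ u y, y ∈ Fib u ↔ T.height y = γ + 1 ∧ T.restrict y γ = u := fun u y => Iff.rfl
  have hFibC : ∀ u, (Fib u).Countable := fun u =>
    (T.level_countable (γ + 1)).mono fun y hy => hy.1
  have hFibI : ∀ u, T.height u = γ → (Fib u).Infinite := by
    intro u hu
    refine (T.splitting u).mono ?_
    rintro y ⟨h1, h2⟩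
    exact ⟨by rw [h2, hu], T.restrict_eq h1.le hu⟩
  have hmemFib : ∀ x : α, T.height x = γ + 1 → x ∈ Fib (T.restrict x γ) := fun x hx => ⟨hx, rfl⟩
  have hhu : ∀ x : α, T.height x = γ + 1 → T.height (T.restrict x γ) = γ := fun x hx =>
    T.height_restrict x (by rw [hx]; exact hsucc.le)
  have hsubY : ∀ u, (Y ∩ Fib u).Subsingleton := by
    intro u x hx y hy
    exact hYdrop hx.1 hy.1 (by simp only; rw [hx.2.2, hy.2.2])
  have hsubZ : ∀ u, (Z ∩ Fib u).Subsingleton := by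
    intro u x hx y hy
    exact hZdrop hx.1 hy.1 (by simp only; rw [hx.2.2, hy.2.2])
  have hdisj : ∀ a, a ∈ Y → a ∈ Z → False := by
    intro a h1 h2
    have : a ∈ Y ∩ Z := ⟨h1, h2⟩
    rw [hYZ] at this
    exact this
  have key : ∀ (τ : ι) (u : α), ∃ φ φ' : α → α, T.height u = γ →
      (∀ x ∈ Fib u, φ x ∈ Fib (f τ u) ∧ φ' (φ x) = x) ∧
      (∀ y ∈ Fib (f τ u), φ' y ∈ Fib u ∧ φ (φ' y) = y) ∧
      (∀ x ∈ Y ∩ Fib u, ∀ y ∈ Y ∩ Fib (f τ u), φ x = y) ∧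
      (τ ∈ A → ∀ x ∈ Z ∩ Fib u, ∀ z ∈ Z ∩ Fib (f τ u), φ x = z) ∧
      ((τ ∈ B ∧ τ ∉ A) → ∀ x ∈ Z ∩ Fib u, φ x ∉ Y ∪ Z) ∧
      ((τ ∈ B ∧ τ ∉ A) → ∀ z ∈ Z ∩ Fib (f τ u), φ' z ∉ Y ∪ Z) := by
    intro τ u
    by_cases hu : T.height u = γ
    · have hv : T.height (f τ u) = γ := by rw [(hf τ).1 u hu.le, hu]
      obtain ⟨φ, φ', p1, p2, p3, p4, p5, p6⟩ :=
        fiber_bij (Fib u) (Fib (f τ u)) Y Z (hFibC u) (hFibI u hu) (hFibC _) (hFibI _ hv)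
          hYfin hZfin hdisj (hsubY u) (hsubZ u) (hsubY _) (hsubZ _)
          (τ ∈ A) (τ ∈ B ∧ τ ∉ A) (fun h => h.2)
      exact ⟨φ, φ', fun _ => ⟨p1, p2, p3, p4, p5, p6⟩⟩
    · exact ⟨id, id, fun h => absurd h hu⟩
  choose Φ Φ' hΦ using key
  set g : ι → α → α := fun τ x => if T.height x ≤ γ then f τ x
      else if T.height x = γ + 1 then Φ τ (T.restrict x γ) x else x with hgdef
  set g' : ι → α → α := fun τ x => if T.height x ≤ γ then f' τ x
      else if T.height x = γ + 1 then Φ' τ (f' τ (T.restrict x γ)) x else x with hg'def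
  have hg_lo : ∀ τ x, T.height x ≤ γ → g τ x = f τ x := by
    intro τ x h; simp only [hgdef, if_pos h]
  have hg'_lo : ∀ τ x, T.height x ≤ γ → g' τ x = f' τ x := by
    intro τ x h; simp only [hg'def, if_pos h]
  have hnotle : ∀ x : α, T.height x = γ + 1 → ¬ T.height x ≤ γ := by
    intro x h; rw [h]; exact not_le.mpr hsucc
  have hg_hi : ∀ τ x, T.height x = γ + 1 → g τ x = Φ τ (T.restrict x γ) x := by
    intro τ x h; simp only [hgdef, if_neg (hnotle x h), if_pos h]
  have hg'_hi : ∀ τ x, T.height x = γ + 1 → g' τ x = Φ' τ (f' τ (T.restrict x γ)) x := by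
    intro τ x h; simp only [hg'def, if_neg (hnotle x h), if_pos h]
  have hmapg : ∀ τ x, T.height x = γ + 1 →
      g τ x ∈ Fib (f τ (T.restrict x γ)) ∧ g' τ (g τ x) = x := by
    intro τ x hx
    have hu := hhu x hx
    have h1 := (hΦ τ _ hu).1 x (hmemFib x hx)
    rw [hg_hi τ x hx]
    refine ⟨h1.1, ?_⟩
    have hΦx : T.height (Φ τ (T.restrict x γ) x) = γ + 1 := h1.1.1
    rw [hg'_hi τ _ hΦx, h1.1.2, (hf τ).2.2.1 _ hu.le]
    exact h1.2
  have hmapg' : ∀ τ x, T.height x = γ + 1 →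
      g' τ x ∈ Fib (f' τ (T.restrict x γ)) ∧ g τ (g' τ x) = x := by
    intro τ x hx
    have hu := hhu x hx
    have hu' : T.height (f' τ (T.restrict x γ)) = γ := by rw [(hf τ).2.1 _ hu.le, hu]
    have hfu : f τ (f' τ (T.restrict x γ)) = T.restrict x γ := (hf τ).2.2.2.1 _ hu.le
    have hxG : x ∈ Fib (f τ (f' τ (T.restrict x γ))) := by rw [hfu]; exact hmemFib x hx
    have h2 := (hΦ τ _ hu').2.1 x hxG
    rw [hg'_hi τ x hx]
    refine ⟨h2.1, ?_⟩
    have hΦx : T.height (Φ' τ (f' τ (T.restrict x γ)) x) = γ + 1 := h2.1.1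
    rw [hg_hi τ _ hΦx, h2.1.2]
    exact h2.2
  refine ⟨g, g', ?_, fun τ => ⟨hg_lo τ, hg'_lo τ⟩, ?_, ?_, ?_⟩
  · -- IsTreeAuto
    intro τ
    refine ⟨?_, ?_, ?_, ?_, ?_, ?_⟩
    · intro x hx
      rcases hle_split _ hx with h | h
      · rw [hg_lo τ x h]; exact (hf τ).1 x h
      · rw [h]; exact (hmapg τ x h).1.1
    · intro x hx
      rcases hle_split _ hx with h | h
      · rw [hg'_lo τ x h]; exact (hf τ).2.1 x h
      · rw [h]; exact (hmapg' τ x h).1.1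
    · intro x hx
      rcases hle_split _ hx with h | h
      · rw [hg_lo τ x h, hg'_lo τ _ (by rw [(hf τ).1 x h]; exact h)]
        exact (hf τ).2.2.1 x h
      · exact (hmapg τ x h).2
    · intro x hx
      rcases hle_split _ hx with h | h
      · rw [hg'_lo τ x h, hg_lo τ _ (by rw [(hf τ).2.1 x h]; exact h)]
        exact (hf τ).2.2.2.1 x h
      · exact (hmapg' τ x h).2
    · intro x y hy hxy
      have hxy' := T.height_strictMono hxy
      rcases hle_split _ hy with h | h
      · rw [hg_lo τ x (hxy'.le.trans h), hg_lo τ y h]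
        exact (hf τ).2.2.2.2.1 x y h hxy
      · have hx : T.height x ≤ γ := hlt_split _ (h ▸ hxy')
        have hu := hhu y h
        have hry : T.restrict y γ < y := by
          refine lt_of_le_of_ne (T.restrict_le y (β := γ) (by rw [h]; exact hsucc.le)) fun he => ?_
          rw [← he, hu] at h
          exact (ne_of_gt hsucc) h.symm
        have hxu : x ≤ T.restrict y γ := by
          rcases T.pred_linear hxy hry with h' | h'
          · exact h'
          · rcases lt_or_eq_of_le h' with h'' | h''
            · exact absurd (T.height_strictMono h'') (by rw [hu]; exact not_lt.mpr hx)
            · exact h''.symm.le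
        have h1 := (hmapg τ y h).1
        have h2 : f τ (T.restrict y γ) < g τ y := by
          have hle : f τ (T.restrict y γ) ≤ g τ y := by
            have := T.restrict_le (g τ y) (β := γ) (by rw [h1.1]; exact hsucc.le)
            rw [h1.2] at this
            exact this
          refine lt_of_le_of_ne hle fun he => ?_
          have hhe : T.height (f τ (T.restrict y γ)) = γ := by rw [(hf τ).1 _ hu.le, hu]
          rw [he, h1.1] at hhe
          exact (ne_of_gt hsucc) hhe
        have h3 : f τ x ≤ f τ (T.restrict y γ) := by
          rcases lt_or_eq_of_le hxu with h' | h'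
          · exact ((hf τ).2.2.2.2.1 x _ hu.le h').le
          · rw [h']
        rw [hg_lo τ x hx]
        exact lt_of_le_of_lt h3 h2
    · intro x y hy hxy
      have hxy' := T.height_strictMono hxy
      rcases hle_split _ hy with h | h
      · rw [hg'_lo τ x (hxy'.le.trans h), hg'_lo τ y h]
        exact (hf τ).2.2.2.2.2 x y h hxy
      · have hx : T.height x ≤ γ := hlt_split _ (h ▸ hxy')
        have hu := hhu y h
        have hry : T.restrict y γ < y := by
          refine lt_of_le_of_ne (T.restrict_le y (β := γ) (by rw [h]; exact hsucc.le)) fun he => ?_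
          rw [← he, hu] at h
          exact (ne_of_gt hsucc) h.symm
        have hxu : x ≤ T.restrict y γ := by
          rcases T.pred_linear hxy hry with h' | h'
          · exact h'
          · rcases lt_or_eq_of_le h' with h'' | h''
            · exact absurd (T.height_strictMono h'') (by rw [hu]; exact not_lt.mpr hx)
            · exact h''.symm.le
        have h1 := (hmapg' τ y h).1
        have h2 : f' τ (T.restrict y γ) < g' τ y := by
          have hle : f' τ (T.restrict y γ) ≤ g' τ y := by
            have := T.restrict_le (g' τ y) (β := γ) (by rw [h1.1]; exact hsucc.le)
            rw [h1.2] at this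
            exact this
          refine lt_of_le_of_ne hle fun he => ?_
          have hhe : T.height (f' τ (T.restrict y γ)) = γ := by rw [(hf τ).2.1 _ hu.le, hu]
          rw [he, h1.1] at hhe
          exact (ne_of_gt hsucc) hhe
        have h3 : f' τ x ≤ f' τ (T.restrict y γ) := by
          rcases lt_or_eq_of_le hxu with h' | h'
          · exact ((hf τ).2.2.2.2.2 x _ hu.le h').le
          · rw [h']
        rw [hg'_lo τ x hx]
        exact lt_of_le_of_lt h3 h2
  · -- consistency on Y for τ ∈ B
    intro τ hτ x hx y hy
    have hxh := hYlev x hx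
    have hyh := hYlev y hy
    have hu := hhu x hxh
    rw [hg_lo τ _ hu.le, hg_hi τ x hxh]
    constructor
    · intro h
      exact (hΦ τ _ hu).2.2.1 x ⟨hx, hmemFib x hxh⟩ y ⟨hy, hyh, h.symm⟩
    · intro h
      have := ((hΦ τ _ hu).1 x (hmemFib x hxh)).1.2
      rw [h] at this
      exact this.symm
  · -- consistency on Z for τ ∈ A
    intro τ hτ x hx y hy
    have hxh := hZlev x hx
    have hyh := hZlev y hy
    have hu := hhu x hxh
    rw [hg_lo τ _ hu.le, hg_hi τ x hxh]
    constructor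
    · intro h
      exact (hΦ τ _ hu).2.2.2.1 hτ x ⟨hx, hmemFib x hxh⟩ y ⟨hy, hyh, h.symm⟩
    · intro h
      have := ((hΦ τ _ hu).1 x (hmemFib x hxh)).1.2
      rw [h] at this
      exact this.symm
  · -- avoidance
    intro τ hτB hτA x hx
    have hxh := hZlev x hx
    have hu := hhu x hxh
    constructor
    · rw [hg_hi τ x hxh]
      exact (hΦ τ _ hu).2.2.2.2.1 ⟨hτB, hτA⟩ x ⟨hx, hmemFib x hxh⟩
    · rw [hg'_hi τ x hxh]
      have hu' : T.height (f' τ (T.restrict x γ)) = γ := by rw [(hf τ).2.1 _ hu.le, hu]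
      have hfu : f τ (f' τ (T.restrict x γ)) = T.restrict x γ := (hf τ).2.2.2.1 _ hu.le
      refine (hΦ τ _ hu').2.2.2.2.2 ⟨hτB, hτA⟩ x ⟨hx, ?_⟩
      rw [hfu]
      exact hmemFib x hxh
end
end
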